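/- arXiv:2509.14596 — 4 statements merged into one kernel-verified Lean document; each statement's English description precedes it below -/
import Mathlib

section
/- In the multidimensional Siegmund problem, for each nonempty A ⊆ [d]: (i) r_A and β^A are, respectively, the optimal value and the optimal solution of the convex program: maximize u Σ_{k∈A} θ_k − ℓ Σ_{k'∉A} θ_{k'} over θ ∈ ℝ^d subject to Λ(θ) ≤ 0, θ_k ≥ 0 for k ∈ A, and θ_{k'} ≤ 0 for k' ∉ A. (ii) For each γ ∈ ℝ^d with Λ(γ) ≤ 0, v_A(γ) is bounded below by the optimal value of: maximize u Σ_{k∈A} θ_k − ℓ Σ_{k'∉A} θ_{k'} over θ ∈ ℝ^d subject to Λ(θ − γ) ≤ 0, θ_k ≥ 0 for k ∈ A, and θ_{k'} ≤ 0 for k' ∉ A. -/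
open MeasureTheory ProbabilityTheory Filter Set Topology
open scoped ENNReal Pointwise RealInnerProductSpace Classical

noncomputable section

namespace Paper

abbrev Vec (d : ℕ) := EuclideanSpace ℝ (Fin d)

variable {d : ℕ}

/-- The cone generated by a set: `{λ x : λ > 0, x ∈ A}`. -/
def cone (A : Set (Vec d)) : Set (Vec d) := {y | ∃ l : ℝ, 0 < l ∧ ∃ x ∈ A, y = l • x}

variable {Ω : Type*} [MeasurableSpace Ω]

/-- The random walk `S_n = X_0 + ⋯ + X_{n-1}`. -/
def S (X : ℕ → Ω → Vec d) (n : ℕ) (ω : Ω) : Vec d := ∑ i ∈ Finset.range n, X i ω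

/-- The cumulant generating function `Λ(θ) = log E[exp⟪θ, X₁⟫]` (real-valued on its domain). -/
def cgf (P : Measure Ω) (X : ℕ → Ω → Vec d) (θ : Vec d) : ℝ :=
  Real.log (∫ ω, Real.exp ⟪θ, X 0 ω⟫ ∂P)

/-- `θ` belongs to the effective domain of `Λ`. -/
def InDom (P : Measure Ω) (X : ℕ → Ω → Vec d) (θ : Vec d) : Prop :=
  Integrable (fun ω => Real.exp ⟪θ, X 0 ω⟫) P

/-- The effective domain of the Legendre–Fenchel conjugate `Λ*`. -/
def domConj (P : Measure Ω) (X : ℕ → Ω → Vec d) : Set (Vec d) :=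
  {x | BddAbove ((fun θ => ⟪θ, x⟫ - cgf P X θ) '' {θ | InDom P X θ})}

/-- The rate function `I(x) = sup{θ·x : Λ(θ) ≤ 0}`, valued in `[0,∞]`. -/
def rate (P : Measure Ω) (X : ℕ → Ω → Vec d) (x : Vec d) : ℝ≥0∞ :=
  ⨆ θ ∈ {θ : Vec d | InDom P X θ ∧ cgf P X θ ≤ 0}, ENNReal.ofReal ⟪θ, x⟫

/-- `r_W = inf_{x ∈ W} I(x)`. -/
def rOf (P : Measure Ω) (X : ℕ → Ω → Vec d) (W : Set (Vec d)) : ℝ≥0∞ :=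
  ⨅ x ∈ W, rate P X x

/-- The first hitting time of `b • W` by the random walk. -/
def hit (X : ℕ → Ω → Vec d) (W : Set (Vec d)) (b : ℝ) (ω : Ω) : ℕ∞ :=
  ⨅ (n : ℕ) (_ : S X n ω ∈ b • W), (n : ℕ∞)

/-- The basic i.i.d. random walk hypotheses. -/
def IIDWalk (P : Measure Ω) (X : ℕ → Ω → Vec d) : Prop :=
  IsProbabilityMeasure P ∧ (∀ n, Measurable (X n)) ∧
    iIndepFun X P ∧ ∀ n, P.map (X n) = P.map (X 0)

/-- The exponentially tilted step distribution `μ_θ`. -/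
def tiltedLaw (P : Measure Ω) (X : ℕ → Ω → Vec d) (θ : Vec d) : Measure (Vec d) :=
  (P.map (X 0)).withDensity fun x => ENNReal.ofReal (Real.exp (⟪θ, x⟫ - cgf P X θ))

/-- `Q θ` is, for each `θ ∈ dom Λ`, a probability measure under which the increments
are i.i.d. with the tilted law `μ_θ`, i.e. `Q θ = ℙ_θ`. -/
def IsTiltedFamily (P : Measure Ω) (X : ℕ → Ω → Vec d) (Q : Vec d → Measure Ω) : Prop :=
  ∀ θ : Vec d, InDom P X θ →
    IsProbabilityMeasure (Q θ) ∧
    iIndepFun X (Q θ) ∧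
    ∀ n, (Q θ).map (X n) = tiltedLaw P X θ

/-- The likelihood ratio `L_θ(T) = exp(θ·S_T − T Λ(θ)) 1{T < ∞}`. -/
def LR (P : Measure Ω) (X : ℕ → Ω → Vec d) (θ : Vec d) (T : Ω → ℕ∞) (ω : Ω) : ℝ :=
  if T ω = ⊤ then 0
  else Real.exp (⟪θ, S X (T ω).toNat ω⟫ - ((T ω).toNat : ℝ) * cgf P X θ)

/-- `V_θ(x) = sup{α·x : Λ(θ) + Λ(α−θ) ≤ 0}`, with `sup ∅ = −∞`. -/
def Vfun (P : Measure Ω) (X : ℕ → Ω → Vec d) (θ x : Vec d) : EReal :=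
  ⨆ α ∈ {α : Vec d | InDom P X θ ∧ InDom P X (α - θ) ∧ cgf P X θ + cgf P X (α - θ) ≤ 0},
    ((⟪α, x⟫ : ℝ) : EReal)

/-- `v(W; θ) = inf_{x ∈ cl W} V_θ(x)`. -/
def vOf (P : Measure Ω) (X : ℕ → Ω → Vec d) (W : Set (Vec d)) (θ : Vec d) : EReal :=
  ⨅ x ∈ closure W, Vfun P X θ x

/-- The mixture measure `ℙ_Θ = |Θ|⁻¹ ∑_{θ∈Θ} ℙ_θ`. -/
def mix (Q : Vec d → Measure Ω) (Θ : Finset (Vec d)) : Measure Ω :=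
  (Θ.card : ℝ≥0∞)⁻¹ • ∑ θ ∈ Θ, Q θ

/-- Second moment `E_μ[f²]`. -/
def mom2 (μ : Measure Ω) (f : Ω → ℝ) : ℝ :=
  (∫⁻ ω, ENNReal.ofReal ((f ω) ^ 2) ∂μ).toReal

variable {J : ℕ}

/-- `τ_b^* = min_{j ∈ [J]} τ_b^j`. -/
def tauStar (X : ℕ → Ω → Vec d) (W : Fin J → Set (Vec d)) (b : ℝ) (ω : Ω) : ℕ∞ :=
  ⨅ j, hit X (W j) b ω

/-- The wrong-exit event `{τ_b^* < τ_b^0}`. -/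
def wrongExit (X : ℕ → Ω → Vec d) (W0 : Set (Vec d)) (W : Fin J → Set (Vec d)) (b : ℝ) :
    Set Ω :=
  {ω | tauStar X W b ω < hit X W0 b ω}

/-- The event `{τ_b^* = τ_b^j}`. -/
def exitAt (X : ℕ → Ω → Vec d) (W : Fin J → Set (Vec d)) (j : Fin J) (b : ℝ) : Set Ω :=
  {ω | tauStar X W b ω = hit X (W j) b ω}

/-- The estimator `Ŵ_b^j(θ)`. -/
def WhatJ (P : Measure Ω) (X : ℕ → Ω → Vec d) (W0 : Set (Vec d)) (W : Fin J → Set (Vec d))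
    (θ : Vec d) (j : Fin J) (b : ℝ) : Ω → ℝ :=
  Set.indicator (wrongExit X W0 W b ∩ exitAt X W j b)
    (fun ω => (LR P X θ (tauStar X W b) ω)⁻¹)

/-- The mixture estimator `Ŵ_b(Θ)`. -/
def WhatMix (P : Measure Ω) (X : ℕ → Ω → Vec d) (W0 : Set (Vec d)) (W : Fin J → Set (Vec d))
    (Θ : Finset (Vec d)) (b : ℝ) : Ω → ℝ :=
  Set.indicator (wrongExit X W0 W b)
    (fun ω => ((Θ.card : ℝ)⁻¹ * ∑ θ ∈ Θ, LR P X θ (tauStar X W b) ω)⁻¹)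

/-- Asymptotic efficiency of the proposal `ℙ_Θ` for estimating `ℙ(τ_b^* < τ_b^0)`. -/
def AsympEff (P : Measure Ω) (X : ℕ → Ω → Vec d) (W0 : Set (Vec d))
    (W : Fin J → Set (Vec d)) (Q : Vec d → Measure Ω) (Θ : Finset (Vec d)) : Prop :=
  Tendsto (fun b : ℝ =>
      Real.log (mom2 (mix Q Θ) (WhatMix P X W0 W Θ b)) /
        (2 * Real.log ((P (wrongExit X W0 W b)).toReal)))
    atTop (nhds 1)

/-- Condition (C1). -/
def C1 (P : Measure Ω) (X : ℕ → Ω → Vec d) (W : Fin J → Set (Vec d)) : Prop :=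
  ∃ δ > (0 : ℝ), ∀ j, cone (Metric.ball (∫ ω, X 0 ω ∂P) δ) ∩ W j = ∅

/-- Condition (C2). -/
def C2 (P : Measure Ω) (X : ℕ → Ω → Vec d) (W : Fin J → Set (Vec d)) : Prop :=
  IsOpen {θ : Vec d | InDom P X θ} ∧
    ∀ j, (interior (cone (domConj P X)) ∩ W j).Nonempty

/-- Condition (C3). -/
def C3 (W0 : Set (Vec d)) (W : Fin J → Set (Vec d)) : Prop :=
  (∀ j j', j ≠ j' → cone (W j) ∩ cone (W j') = ∅) ∧
  (∀ j, cone W0 ∩ cone (W j) = ∅) ∧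
  ∃ δ > (0 : ℝ), Metric.ball (0 : Vec d) δ ∩ W0 = ∅ ∧
    ∀ j, Metric.ball (0 : Vec d) δ ∩ W j = ∅

/-- Condition (C4). -/
def C4 (P : Measure Ω) (X : ℕ → Ω → Vec d) (W0 : Set (Vec d))
    (W : Fin J → Set (Vec d)) : Prop :=
  (∀ j j', j ≠ j' → closure (cone (W j)) ∩ closure (cone (W j')) = {0}) ∧
  (W0 = ∅ ∨ ∀ j, closure (cone W0) ∩ closure (cone (W j)) = {0}) ∧
  (W0 = ∅ ∨ (Convex ℝ W0 ∧ (interior (cone (domConj P X)) ∩ W0).Nonempty))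

/-- The sets `W^0, W^1, …, W^J` are open and pairwise disjoint, with `W^1, …, W^J` convex. -/
def GoodSets (W0 : Set (Vec d)) (W : Fin J → Set (Vec d)) : Prop :=
  IsOpen W0 ∧ (∀ j, IsOpen (W j)) ∧ (∀ j, Convex ℝ (W j)) ∧
  (∀ j, Disjoint W0 (W j)) ∧ ∀ j j', j ≠ j' → Disjoint (W j) (W j')

/-- `β` is the optimal tilting associated with the region `Wj` (Definition 3.1). -/
def IsOptTilt (P : Measure Ω) (X : ℕ → Ω → Vec d) (Wj : Set (Vec d)) (β : Vec d) : Prop :=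
  InDom P X β ∧ cgf P X β = 0 ∧
  (∀ v ∈ Wj, ((rOf P X Wj : ℝ≥0∞) : EReal) ≤ ((⟪β, v⟫ : ℝ) : EReal)) ∧
  (∀ x : Vec d, rate P X x ≤ rOf P X Wj →
    ((⟪β, x⟫ : ℝ) : EReal) ≤ ((rOf P X Wj : ℝ≥0∞) : EReal))

/-! ### The multidimensional Siegmund problem -/

/-- The region `W^A = {x : x_k > u for k ∈ A, x_{k'} < -ℓ for k' ∉ A}`. -/
def WSieg (ℓ u : ℝ) (A : Finset (Fin d)) : Set (Vec d) :=
  {x | (∀ k ∈ A, u < x k) ∧ ∀ k ∉ A, x k < -ℓ}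

/-- `τ_b^* = min_{A ≠ ∅} τ_b^A` for the multidimensional Siegmund problem. -/
def tauSiegStar (X : ℕ → Ω → Vec d) (ℓ u b : ℝ) (ω : Ω) : ℕ∞ :=
  ⨅ (A : Finset (Fin d)) (_ : A.Nonempty), hit X (WSieg ℓ u A) b ω

/-- The wrong-exit event `{τ_b^* < τ_b^∅}`. -/
def wrongExitSieg (X : ℕ → Ω → Vec d) (ℓ u b : ℝ) : Set Ω :=
  {ω | tauSiegStar X ℓ u b ω < hit X (WSieg ℓ u ∅) b ω}

/-- The mixture estimator `Ŵ_b(Θ)` for the Siegmund problem. -/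
def WhatSieg (P : Measure Ω) (X : ℕ → Ω → Vec d) (ℓ u : ℝ) (Θ : Finset (Vec d)) (b : ℝ) :
    Ω → ℝ :=
  Set.indicator (wrongExitSieg X ℓ u b)
    (fun ω => ((Θ.card : ℝ)⁻¹ * ∑ θ ∈ Θ, LR P X θ (tauSiegStar X ℓ u b) ω)⁻¹)

/-- Asymptotic efficiency of `ℙ_Θ` for estimating `ℙ(τ_b^* < τ_b^∅)` in the Siegmund problem. -/
def AsympEffSieg (P : Measure Ω) (X : ℕ → Ω → Vec d) (ℓ u : ℝ) (Q : Vec d → Measure Ω)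
    (Θ : Finset (Vec d)) : Prop :=
  Tendsto (fun b : ℝ =>
      Real.log (mom2 (mix Q Θ) (WhatSieg P X ℓ u Θ b)) /
        (2 * Real.log ((P (wrongExitSieg X ℓ u b)).toReal)))
    atTop (nhds 1)

/-- The standing assumptions for the multidimensional Siegmund problem. -/
def SiegmundSetting (P : Measure Ω) (X : ℕ → Ω → Vec d) (ℓ u : ℝ) : Prop :=
  IIDWalk P X ∧ 0 < ℓ ∧ 0 < u ∧
  (∀ k : Fin d, ∫ ω, X 0 ω k ∂P < 0) ∧
  IsOpen {θ : Vec d | InDom P X θ} ∧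
  ∀ A : Finset (Fin d), A.Nonempty →
    (interior (cone (domConj P X)) ∩ WSieg ℓ u A).Nonempty

/-- The feasible set of the optimization problem characterizing `r_A` and `β^A`. -/
def SiegFeas (P : Measure Ω) (X : ℕ → Ω → Vec d) (A : Finset (Fin d)) (θ : Vec d) : Prop :=
  InDom P X θ ∧ cgf P X θ ≤ 0 ∧ (∀ k ∈ A, 0 ≤ θ k) ∧ ∀ k ∉ A, θ k ≤ 0

/-- The objective `u ∑_{k ∈ A} θ_k − ℓ ∑_{k' ∉ A} θ_{k'}`. -/
def SiegObj (ℓ u : ℝ) (A : Finset (Fin d)) (θ : Vec d) : ℝ :=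
  u * ∑ k ∈ A, θ k - ℓ * ∑ k ∈ Aᶜ, θ k

/-- The feasible set of the two-coordinate problem defining `s_{k,k'}` and `γ^{k,k'}`. -/
def SiegPairFeas (P : Measure Ω) (X : ℕ → Ω → Vec d) (k k' : Fin d) (θ : Vec d) : Prop :=
  InDom P X θ ∧ cgf P X θ ≤ 0 ∧ 0 ≤ θ k ∧ 0 ≤ θ k' ∧ ∀ i, i ≠ k → i ≠ k' → θ i = 0

/-- `sv` and `γ` are the optimal value and a maximizer of the two-coordinate problem
`max u(θ_k + θ_{k'})` over the feasible set `SiegPairFeas`. -/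
def IsSiegPairOpt (P : Measure Ω) (X : ℕ → Ω → Vec d) (u : ℝ) (k k' : Fin d)
    (sv : ℝ) (γ : Vec d) : Prop :=
  SiegPairFeas P X k k' γ ∧ u * (γ k + γ k') = sv ∧
  ∀ θ, SiegPairFeas P X k k' θ → u * (θ k + θ k') ≤ sv

/-- `z k` is the unique positive root of the `k`-th coordinate cgf:
`E[exp(z_k X_{1,k})] = 1`. -/
def IsCoordRoot (P : Measure Ω) (X : ℕ → Ω → Vec d) (k : Fin d) (z : ℝ) : Prop :=
  0 < z ∧ Integrable (fun ω => Real.exp (z * X 0 ω k)) P ∧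
    ∫ ω, Real.exp (z * X 0 ω k) ∂P = 1 ∧
    ∀ z' : ℝ, 0 < z' → (∫ ω, Real.exp (z' * X 0 ω k) ∂P = 1 ∧
      Integrable (fun ω => Real.exp (z' * X 0 ω k)) P) → z' = z

/-- `r_* := min_{∅ ≠ A ⊆ [d]} r_A` for the Siegmund problem. -/
def rStarSieg (P : Measure Ω) (X : ℕ → Ω → Vec d) (ℓ u : ℝ) : ℝ≥0∞ :=
  ⨅ (A : Finset (Fin d)) (_ : A.Nonempty), rOf P X (WSieg ℓ u A)


/-! ### Auxiliary lemmas for `statement7` -/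

lemma inner_eq_sum {d : ℕ} (x y : Vec d) : ⟪x, y⟫ = ∑ i, x i * y i := by
  rw [PiLp.inner_apply]; simp; exact Finset.sum_congr rfl fun i _ => mul_comm _ _

lemma sieg_obj_le_inner {d : ℕ} (ℓ u : ℝ) (A : Finset (Fin d)) (θ x : Vec d)
    (hθA : ∀ k ∈ A, 0 ≤ θ k) (hθAc : ∀ k ∉ A, θ k ≤ 0)
    (hxA : ∀ k ∈ A, u ≤ x k) (hxAc : ∀ k ∉ A, x k ≤ -ℓ) :
    SiegObj ℓ u A θ ≤ ⟪θ, x⟫ := by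
  have h1 : ⟪θ, x⟫ = ∑ k ∈ A, θ k * x k + ∑ k ∈ Aᶜ, θ k * x k := by
    rw [inner_eq_sum, ← Finset.sum_add_sum_compl A]
  have h2 : SiegObj ℓ u A θ = ∑ k ∈ A, θ k * u + ∑ k ∈ Aᶜ, θ k * (-ℓ) := by
    simp only [SiegObj, ← Finset.sum_mul]; ring
  rw [h1, h2]
  refine add_le_add (Finset.sum_le_sum fun k hk => ?_) (Finset.sum_le_sum fun k hk => ?_)
  · exact mul_le_mul_of_nonneg_left (hxA k hk) (hθA k hk)
  · exact mul_le_mul_of_nonpos_left (hxAc k (Finset.mem_compl.mp hk))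
      (hθAc k (Finset.mem_compl.mp hk))

lemma sieg_obj_nonneg {d : ℕ} {ℓ u : ℝ} (hℓ : 0 ≤ ℓ) (hu : 0 ≤ u) (A : Finset (Fin d))
    {θ : Vec d} (hθA : ∀ k ∈ A, 0 ≤ θ k) (hθAc : ∀ k ∉ A, θ k ≤ 0) :
    0 ≤ SiegObj ℓ u A θ := by
  have h1 : 0 ≤ u * ∑ k ∈ A, θ k := mul_nonneg hu (Finset.sum_nonneg hθA)
  have h2 : ℓ * ∑ k ∈ Aᶜ, θ k ≤ 0 :=
    mul_nonpos_of_nonneg_of_nonpos hℓ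
      (Finset.sum_nonpos fun k hk => hθAc k (Finset.mem_compl.mp hk))
  simp only [SiegObj]; linarith

lemma no_neg_dir {d : ℕ} (β v0 : Vec d) (W : Set (Vec d)) (R : ℝ)
    (hR : ∀ v ∈ W, R ≤ ⟪β, v⟫) (w : Vec d)
    (hmem : ∀ t : ℝ, 0 ≤ t → v0 + t • w ∈ W) (hneg : ⟪β, w⟫ < 0) : False := by
  set c := ⟪β, w⟫ with hc
  set t := max 0 ((R - 1 - ⟪β, v0⟫) / c) with ht
  have ht0 : 0 ≤ t := le_max_left _ _
  have htc : t * c ≤ R - 1 - ⟪β, v0⟫ := by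
    have := le_max_right 0 ((R - 1 - ⟪β, v0⟫) / c)
    rwa [div_le_iff_of_neg hneg, ← ht] at this
  have hfin := hR _ (hmem t ht0)
  rw [inner_add_right, real_inner_smul_right, ← hc] at hfin
  linarith

theorem statement7
    {d : ℕ} {Ω : Type*} [MeasurableSpace Ω] (P : Measure Ω) (X : ℕ → Ω → Vec d)
    (ℓ u : ℝ) (hS : SiegmundSetting P X ℓ u)
    (A : Finset (Fin d)) (hA : A.Nonempty)
    (βA : Vec d) (hβA : IsOptTilt P X (WSieg ℓ u A) βA) :
    -- (i) `r_A` and `β^A` are the optimal value and an optimal solution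
    ((∀ θ : Vec d, SiegFeas P X A θ →
        ENNReal.ofReal (SiegObj ℓ u A θ) ≤ rOf P X (WSieg ℓ u A)) ∧
      SiegFeas P X A βA ∧
      ENNReal.ofReal (SiegObj ℓ u A βA) = rOf P X (WSieg ℓ u A)) ∧
    -- (ii) lower bound on `v_A(γ)`
    (∀ γ : Vec d, InDom P X γ → cgf P X γ ≤ 0 →
      ∀ θ : Vec d, InDom P X (θ - γ) → cgf P X (θ - γ) ≤ 0 →
        (∀ k ∈ A, 0 ≤ θ k) → (∀ k ∉ A, θ k ≤ 0) →
        ((ENNReal.ofReal (SiegObj ℓ u A θ) : ℝ≥0∞) : EReal)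
          ≤ vOf P X (WSieg ℓ u A) γ) := by
  obtain ⟨hβdom, hβcgf, hβlow, hβup⟩ := hβA
  obtain ⟨hiid, hℓ, hu, hmean, hopen, hdom⟩ := hS
  -- Part (i), first conjunct: every feasible point has objective at most `r_A`.
  have part1 : ∀ θ : Vec d, SiegFeas P X A θ →
      ENNReal.ofReal (SiegObj ℓ u A θ) ≤ rOf P X (WSieg ℓ u A) := by
    rintro θ ⟨hθdom, hθcgf, hθA, hθAc⟩
    refine le_iInf₂ fun x hx => ?_
    have hle : SiegObj ℓ u A θ ≤ ⟪θ, x⟫ :=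
      sieg_obj_le_inner ℓ u A θ x hθA hθAc (fun k hk => (hx.1 k hk).le)
        (fun k hk => (hx.2 k hk).le)
    calc ENNReal.ofReal (SiegObj ℓ u A θ) ≤ ENNReal.ofReal ⟪θ, x⟫ :=
          ENNReal.ofReal_le_ofReal hle
      _ ≤ rate P X x :=
          le_iSup₂ (f := fun (θ : Vec d) (_ : θ ∈ {θ : Vec d | InDom P X θ ∧ cgf P X θ ≤ 0}) =>
            ENNReal.ofReal ⟪θ, x⟫) θ ⟨hθdom, hθcgf⟩
  -- the family of interior points of `W^A`
  set vpt : ℝ → Vec d :=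
    fun ε => (WithLp.equiv 2 (Fin d → ℝ)).symm (fun i => if i ∈ A then u + ε else -ℓ - ε)
    with hvpt
  have hvpt_apply : ∀ (ε : ℝ) (i : Fin d), vpt ε i = if i ∈ A then u + ε else -ℓ - ε := by
    intro ε i; simp [hvpt]
  have hvmem : ∀ ε : ℝ, 0 < ε → vpt ε ∈ WSieg ℓ u A := by
    intro ε hε
    constructor
    · intro k hk; rw [hvpt_apply, if_pos hk]; linarith
    · intro k hk; rw [hvpt_apply, if_neg hk]; linarith
  -- `r_A` is finite
  have hrtop : rOf P X (WSieg ℓ u A) ≠ ⊤ := by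
    intro h
    have hfin := hβlow (vpt 1) (hvmem 1 one_pos)
    rw [h] at hfin
    simp only [EReal.coe_ennreal_top, top_le_iff] at hfin
    exact EReal.coe_ne_top _ hfin
  set R := (rOf P X (WSieg ℓ u A)).toReal with hRdef
  have hcoeR : ((R : ℝ) : EReal) = ((rOf P X (WSieg ℓ u A) : ℝ≥0∞) : EReal) := by
    have h2 : (((rOf P X (WSieg ℓ u A) : EReal)).toReal : EReal)
        = (rOf P X (WSieg ℓ u A) : EReal) :=
      EReal.coe_toReal (by simpa using hrtop) (by simp)
    rw [EReal.toReal_coe_ennreal] at h2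
    exact h2
  have hRle : ∀ v ∈ WSieg ℓ u A, R ≤ ⟪βA, v⟫ := by
    intro v hv
    have hfin := hβlow v hv
    rw [← hcoeR] at hfin
    exact_mod_cast hfin
  -- sign conditions for `βA`
  have hsignA : ∀ k ∈ A, 0 ≤ βA k := by
    intro k hk
    by_contra hneg
    push_neg at hneg
    refine no_neg_dir βA (vpt 1) (WSieg ℓ u A) R hRle (EuclideanSpace.single k (1 : ℝ))
      ?_ ?_
    · intro t ht
      constructor
      · intro k' hk'
        have : (vpt 1 + t • EuclideanSpace.single k (1 : ℝ)) k'
            = vpt 1 k' + t * (if k' = k then 1 else 0) := by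
          simp [EuclideanSpace.single_apply]
        rw [this, hvpt_apply, if_pos hk']
        by_cases hkk : k' = k <;> simp [hkk] <;> linarith
      · intro k' hk'
        have hne : k' ≠ k := fun h => hk' (h ▸ hk)
        have : (vpt 1 + t • EuclideanSpace.single k (1 : ℝ)) k'
            = vpt 1 k' + t * (if k' = k then 1 else 0) := by
          simp [EuclideanSpace.single_apply]
        rw [this, hvpt_apply, if_neg hk', if_neg hne]
        linarith
    · rw [EuclideanSpace.inner_single_right]
      simpa using hneg
  have hsignAc : ∀ k ∉ A, βA k ≤ 0 := by
    intro k hk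
    by_contra hneg
    push_neg at hneg
    refine no_neg_dir βA (vpt 1) (WSieg ℓ u A) R hRle (EuclideanSpace.single k (-1 : ℝ))
      ?_ ?_
    · intro t ht
      constructor
      · intro k' hk'
        have hne : k' ≠ k := fun h => hk (h ▸ hk')
        have : (vpt 1 + t • EuclideanSpace.single k (-1 : ℝ)) k'
            = vpt 1 k' + t * (if k' = k then -1 else 0) := by
          simp [EuclideanSpace.single_apply]
        rw [this, hvpt_apply, if_pos hk', if_neg hne]
        linarith
      · intro k' hk'
        have : (vpt 1 + t • EuclideanSpace.single k (-1 : ℝ)) k'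
            = vpt 1 k' + t * (if k' = k then -1 else 0) := by
          simp [EuclideanSpace.single_apply]
        rw [this, hvpt_apply, if_neg hk']
        by_cases hkk : k' = k <;> simp [hkk] <;> linarith
    · rw [EuclideanSpace.inner_single_right]
      simpa using hneg
  have hfeasβ : SiegFeas P X A βA := ⟨hβdom, hβcgf.le, hsignA, hsignAc⟩
  -- `R ≤ SiegObj βA`
  set Sa := ∑ k ∈ A, βA k with hSa
  set Sc := ∑ k ∈ Aᶜ, βA k with hSc
  have hip : ∀ ε : ℝ, ⟪βA, vpt ε⟫ = SiegObj ℓ u A βA + ε * (Sa - Sc) := by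
    intro ε
    rw [inner_eq_sum, ← Finset.sum_add_sum_compl A]
    have e1 : ∑ k ∈ A, βA k * vpt ε k = Sa * (u + ε) := by
      rw [hSa, Finset.sum_mul]
      exact Finset.sum_congr rfl fun k hk => by rw [hvpt_apply, if_pos hk]
    have e2 : ∑ k ∈ Aᶜ, βA k * vpt ε k = Sc * (-ℓ - ε) := by
      rw [hSc, Finset.sum_mul]
      exact Finset.sum_congr rfl fun k hk => by
        rw [hvpt_apply, if_neg (Finset.mem_compl.mp hk)]
    rw [e1, e2]
    simp only [SiegObj, ← hSa, ← hSc]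
    ring
  have hkey : ∀ ε : ℝ, 0 < ε → R ≤ SiegObj ℓ u A βA + ε * (Sa - Sc) := by
    intro ε hε
    have := hRle (vpt ε) (hvmem ε hε)
    rwa [hip] at this
  have hRobj : R ≤ SiegObj ℓ u A βA := by
    by_contra hlt
    push_neg at hlt
    set c := Sa - Sc with hcdef
    set ε := (R - SiegObj ℓ u A βA) / (2 * (|c| + 1)) with hεdef
    have hεpos : 0 < ε := div_pos (by linarith) (by positivity)
    have h1 := hkey ε hεpos
    have h2 : ε * c ≤ ε * (|c| + 1) :=
      mul_le_mul_of_nonneg_left (by linarith [le_abs_self c]) hεpos.le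
    have habs : (0:ℝ) < |c| + 1 := by positivity
    have h3 : ε * (|c| + 1) = (R - SiegObj ℓ u A βA) / 2 := by
      rw [hεdef]; field_simp
    linarith
  have heq : ENNReal.ofReal (SiegObj ℓ u A βA) = rOf P X (WSieg ℓ u A) := by
    refine le_antisymm (part1 βA hfeasβ) ?_
    conv_lhs => rw [← ENNReal.ofReal_toReal hrtop]
    exact ENNReal.ofReal_le_ofReal hRobj
  refine ⟨⟨part1, hfeasβ, heq⟩, ?_⟩
  -- Part (ii)
  intro γ hγdom hγcgf θ hθγdom hθγcgf hθA hθAc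
  refine le_iInf₂ fun x hx => ?_
  have hCclosed : IsClosed {x : Vec d | (∀ k ∈ A, u ≤ x k) ∧ ∀ k ∉ A, x k ≤ -ℓ} := by
    have hset : {x : Vec d | (∀ k ∈ A, u ≤ x k) ∧ ∀ k ∉ A, x k ≤ -ℓ}
        = (⋂ k ∈ A, {x : Vec d | u ≤ x k}) ∩ ⋂ (k) (_ : k ∉ A), {x : Vec d | x k ≤ -ℓ} := by
      ext y; simp [Set.mem_iInter]
    rw [hset]
    refine IsClosed.inter (isClosed_biInter fun k _ => ?_) (isClosed_biInter fun k _ => ?_)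
    · exact isClosed_le continuous_const (EuclideanSpace.proj k).continuous
    · exact isClosed_le (EuclideanSpace.proj k).continuous continuous_const
  have hxC : (∀ k ∈ A, u ≤ x k) ∧ ∀ k ∉ A, x k ≤ -ℓ := by
    have hsub : closure (WSieg ℓ u A)
        ⊆ {x : Vec d | (∀ k ∈ A, u ≤ x k) ∧ ∀ k ∉ A, x k ≤ -ℓ} :=
      closure_minimal
        (fun y hy => ⟨fun k hk => (hy.1 k hk).le, fun k hk => (hy.2 k hk).le⟩) hCclosed
    exact hsub hx
  have hle : SiegObj ℓ u A θ ≤ ⟪θ, x⟫ :=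
    sieg_obj_le_inner ℓ u A θ x hθA hθAc hxC.1 hxC.2
  have h0 : 0 ≤ SiegObj ℓ u A θ := sieg_obj_nonneg hℓ.le hu.le A hθA hθAc
  have hVle : ((⟪θ, x⟫ : ℝ) : EReal) ≤ Vfun P X γ x :=
    le_iSup₂ (f := fun (α : Vec d)
        (_ : α ∈ {α : Vec d | InDom P X γ ∧ InDom P X (α - γ) ∧
          cgf P X γ + cgf P X (α - γ) ≤ 0}) => ((⟪α, x⟫ : ℝ) : EReal))
      θ ⟨hγdom, hθγdom, by linarith⟩
  have h2 : ((ENNReal.ofReal (SiegObj ℓ u A θ) : ℝ≥0∞) : EReal)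
      = ((SiegObj ℓ u A θ : ℝ) : EReal) := by
    rw [EReal.coe_ennreal_ofReal, max_eq_left h0]
  rw [h2]
  exact le_trans (by exact_mod_cast hle) hVle


end Paper
end
end

section
/- In the gap-rule setting, for each A ∈ G_m^-: (i) r_A and β^A are, respectively, the optimal value and the optimal solution of: maximize Σ_{k∈A} θ_k over θ ∈ ℝ^d subject to Λ(θ) ≤ 0, Σ_{i∈[d]} θ_i = 0, θ_k ≥ 0 for k ∈ A, and θ_{k'} ≤ 0 for k' ∉ A. (ii) For each γ ∈ ℝ^d with Λ(γ) ≤ 0, v_A(γ) is bounded below by the optimal value of: maximize Σ_{k∈A} θ_k over θ ∈ ℝ^d subject to Λ(θ − γ) ≤ 0, Σ_{i∈[d]} θ_i = 0, θ_k ≥ 0 for k ∈ A, and θ_{k'} ≤ 0 for k' ∉ A. -/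
open MeasureTheory ProbabilityTheory Filter Set Topology
open scoped ENNReal Pointwise RealInnerProductSpace Classical

noncomputable section

namespace Paper

variable {d : ℕ}

variable {Ω : Type*} [MeasurableSpace Ω]

variable {J : ℕ}

/-! ### The gap rule -/

/-- The index set `[m] = {1, …, m}` inside `Fin d`. -/
def Im (d m : ℕ) : Finset (Fin d) := Finset.univ.filter (fun k => (k : ℕ) < m)

/-- The region `W^A = {x : x_k − x_{k'} > 1 for all k ∈ A, k' ∉ A}`. -/
def WGap (A : Finset (Fin d)) : Set (Vec d) :=
  {x | ∀ k ∈ A, ∀ k' ∉ A, 1 < x k - x k'}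

/-- `τ_b^* = min_{A ∈ G_m^-} τ_b^A` for the gap rule. -/
def tauGapStar (X : ℕ → Ω → Vec d) (m : ℕ) (b : ℝ) (ω : Ω) : ℕ∞ :=
  ⨅ (A : Finset (Fin d)) (_ : A.card = m ∧ A ≠ Im d m), hit X (WGap A) b ω

/-- The wrong-exit event `{τ_b^* < τ_b^{[m]}}` for the gap rule. -/
def wrongExitGap (X : ℕ → Ω → Vec d) (m : ℕ) (b : ℝ) : Set Ω :=
  {ω | tauGapStar X m b ω < hit X (WGap (Im d m)) b ω}

/-- The mixture estimator `Ŵ_b(Θ)` for the gap rule. -/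
def WhatGap (P : Measure Ω) (X : ℕ → Ω → Vec d) (m : ℕ) (Θ : Finset (Vec d)) (b : ℝ) :
    Ω → ℝ :=
  Set.indicator (wrongExitGap X m b)
    (fun ω => ((Θ.card : ℝ)⁻¹ * ∑ θ ∈ Θ, LR P X θ (tauGapStar X m b) ω)⁻¹)

/-- Asymptotic efficiency of `ℙ_Θ` for the gap rule. -/
def AsympEffGap (P : Measure Ω) (X : ℕ → Ω → Vec d) (m : ℕ) (Q : Vec d → Measure Ω)
    (Θ : Finset (Vec d)) : Prop :=
  Tendsto (fun b : ℝ =>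
      Real.log (mom2 (mix Q Θ) (WhatGap P X m Θ b)) /
        (2 * Real.log ((P (wrongExitGap X m b)).toReal)))
    atTop (nhds 1)

/-- The standing assumptions for the gap rule. -/
def GapSetting (P : Measure Ω) (X : ℕ → Ω → Vec d) (m : ℕ) : Prop :=
  IIDWalk P X ∧ 2 ≤ m ∧ m + 2 ≤ d ∧
  (∀ k : Fin d, (k : ℕ) < m → 0 < ∫ ω, X 0 ω k ∂P) ∧
  (∀ k : Fin d, m ≤ (k : ℕ) → ∫ ω, X 0 ω k ∂P < 0) ∧
  IsOpen {θ : Vec d | InDom P X θ} ∧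
  ∀ A : Finset (Fin d), A.card = m → A ≠ Im d m →
    (interior (cone (domConj P X)) ∩ WGap A).Nonempty

/-- The feasible set of the optimization problem characterizing `r_A` and `β^A` for the
gap rule. -/
def GapFeas (P : Measure Ω) (X : ℕ → Ω → Vec d) (A : Finset (Fin d)) (θ : Vec d) : Prop :=
  InDom P X θ ∧ cgf P X θ ≤ 0 ∧ (∑ i : Fin d, θ i) = 0 ∧
    (∀ k ∈ A, 0 ≤ θ k) ∧ ∀ k ∉ A, θ k ≤ 0

/-- The feasible set of the two-index problem defining `z̃_{ℓ,ℓ'}` and `γ̃^{ℓ,ℓ'}`. -/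
def GapFeas2 (P : Measure Ω) (X : ℕ → Ω → Vec d) (l l' : Fin d) (θ : Vec d) : Prop :=
  InDom P X θ ∧ cgf P X θ ≤ 0 ∧ θ l + θ l' = 0 ∧ θ l ≤ 0 ∧ 0 ≤ θ l' ∧
    ∀ k, k ≠ l → k ≠ l' → θ k = 0

/-- `zv` and `γ` are the optimal value and a maximizer of the two-index problem. -/
def IsGapOpt2 (P : Measure Ω) (X : ℕ → Ω → Vec d) (l l' : Fin d)
    (zv : ℝ) (γ : Vec d) : Prop :=
  GapFeas2 P X l l' γ ∧ γ l' = zv ∧ ∀ θ, GapFeas2 P X l l' θ → θ l' ≤ zv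

/-- The feasible set of the four-index problem defining `s̃` and its maximizer. -/
def GapFeas4 (P : Measure Ω) (X : ℕ → Ω → Vec d) (l1 l2 l1' l2' : Fin d) (θ : Vec d) :
    Prop :=
  InDom P X θ ∧ cgf P X θ ≤ 0 ∧ θ l1 + θ l2 + θ l1' + θ l2' = 0 ∧
    θ l1 ≤ 0 ∧ θ l2 ≤ 0 ∧ 0 ≤ θ l1' ∧ 0 ≤ θ l2' ∧
    ∀ k, k ≠ l1 → k ≠ l2 → k ≠ l1' → k ≠ l2' → θ k = 0

/-- `sv` and `γ` are the optimal value and a maximizer of the four-index problem. -/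
def IsGapOpt4 (P : Measure Ω) (X : ℕ → Ω → Vec d) (l1 l2 l1' l2' : Fin d)
    (sv : ℝ) (γ : Vec d) : Prop :=
  GapFeas4 P X l1 l2 l1' l2' γ ∧ γ l1' + γ l2' = sv ∧
    ∀ θ, GapFeas4 P X l1 l2 l1' l2' θ → θ l1' + θ l2' ≤ sv

/-- The singleton swap `A = ([m] \ {k}) ∪ {k'}` of `G_m^1`. -/
def GapSwap (d m : ℕ) (k k' : Fin d) : Finset (Fin d) := insert k' (Im d m \ {k})

/-- `min_{A ∈ G_m^1} r_A`. -/
def rG1 (P : Measure Ω) (X : ℕ → Ω → Vec d) (m : ℕ) : ℝ≥0∞ :=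
  ⨅ (k : Fin d) (_ : (k : ℕ) < m) (k' : Fin d) (_ : m ≤ (k' : ℕ)),
    rOf P X (WGap (GapSwap d m k k'))

/-- `r_* = min_{A ∈ G_m^-} r_A`. -/
def rStarGap (P : Measure Ω) (X : ℕ → Ω → Vec d) (m : ℕ) : ℝ≥0∞ :=
  ⨅ (A : Finset (Fin d)) (_ : A.card = m ∧ A ≠ Im d m), rOf P X (WGap A)


private lemma slope_nonneg {r c s : ℝ} (h : ∀ t : ℝ, 0 ≤ t → r ≤ c + t * s) : 0 ≤ s := by
  by_contra hs
  push_neg at hs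
  have h0 := h 0 le_rfl
  have ht0 : 0 ≤ (r - c - 1) / s := by
    rw [div_nonneg_iff]
    right
    exact ⟨by linarith, hs.le⟩
  have ht := h _ ht0
  rw [div_mul_cancel₀ _ (ne_of_lt hs)] at ht
  linarith

private lemma gap_key {d : ℕ} (A : Finset (Fin d)) (hA : A.Nonempty) (hAc : Aᶜ.Nonempty)
    (θ x : Vec d) (hsum : ∑ i, θ i = 0) (hpos : ∀ k ∈ A, 0 ≤ θ k)
    (hneg : ∀ k ∉ A, θ k ≤ 0) {c : ℝ}
    (hx : ∀ k ∈ A, ∀ k' ∉ A, c ≤ x k - x k') :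
    c * ∑ k ∈ A, θ k ≤ ⟪θ, x⟫ := by
  have hinner : ⟪θ, x⟫ = ∑ i, θ i * x i := by simp [PiLp.inner_apply, mul_comm]
  set T := ∑ k ∈ A, θ k with hT
  have hTnn : 0 ≤ T := Finset.sum_nonneg hpos
  obtain ⟨k0, hk0, ha⟩ := A.exists_mem_eq_inf' hA (fun i => x i)
  obtain ⟨k1, hk1, hb⟩ := Aᶜ.exists_mem_eq_sup' hAc (fun i => x i)
  set a := A.inf' hA (fun i => x i) with hadef
  set b := Aᶜ.sup' hAc (fun i => x i) with hbdef
  have hk1' : k1 ∉ A := Finset.mem_compl.mp hk1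
  have hab : c ≤ a - b := by rw [ha, hb]; exact hx k0 hk0 k1 hk1'
  have hcompl : ∑ k ∈ Aᶜ, θ k = -T := by
    have h2 := Finset.sum_add_sum_compl A θ
    rw [hsum] at h2; linarith
  have h1 : T * a ≤ ∑ k ∈ A, θ k * x k := by
    rw [hT, Finset.sum_mul]
    exact Finset.sum_le_sum fun k hk =>
      mul_le_mul_of_nonneg_left (Finset.inf'_le (fun i => x i) hk) (hpos k hk)
  have h2 : (-T) * b ≤ ∑ k ∈ Aᶜ, θ k * x k := by
    rw [← hcompl, Finset.sum_mul]
    exact Finset.sum_le_sum fun k hk =>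
      mul_le_mul_of_nonpos_left (Finset.le_sup' (fun i => x i) hk)
        (hneg k (Finset.mem_compl.mp hk))
  calc c * T ≤ T * a + (-T) * b := by nlinarith [mul_le_mul_of_nonneg_left hab hTnn]
    _ ≤ ∑ k ∈ A, θ k * x k + ∑ k ∈ Aᶜ, θ k * x k := add_le_add h1 h2
    _ = ∑ i, θ i * x i := Finset.sum_add_sum_compl A _
    _ = ⟪θ, x⟫ := hinner.symm


theorem statement11
    {d : ℕ} {Ω : Type*} [MeasurableSpace Ω] (P : Measure Ω) (X : ℕ → Ω → Vec d)
    (m : ℕ) (hG : GapSetting P X m)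
    (A : Finset (Fin d)) (hAcard : A.card = m) (hAne : A ≠ Im d m)
    (βA : Vec d) (hβA : IsOptTilt P X (WGap A) βA) :
    -- (i) `r_A` and `β^A` are the optimal value and an optimal solution
    ((∀ θ : Vec d, GapFeas P X A θ →
        ENNReal.ofReal (∑ k ∈ A, θ k) ≤ rOf P X (WGap A)) ∧
      GapFeas P X A βA ∧
      ENNReal.ofReal (∑ k ∈ A, βA k) = rOf P X (WGap A)) ∧
    -- (ii) lower bound on `v_A(γ)`
    (∀ γ : Vec d, InDom P X γ → cgf P X γ ≤ 0 →
      ∀ θ : Vec d, InDom P X (θ - γ) → cgf P X (θ - γ) ≤ 0 →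
        (∑ i : Fin d, θ i) = 0 → (∀ k ∈ A, 0 ≤ θ k) → (∀ k ∉ A, θ k ≤ 0) →
        ((ENNReal.ofReal (∑ k ∈ A, θ k) : ℝ≥0∞) : EReal) ≤ vOf P X (WGap A) γ) := by
  obtain ⟨-, hm2, hmd, -, -, -, -⟩ := hG
  have hAne' : A.Nonempty := Finset.card_pos.mp (by rw [hAcard]; omega)
  have hAcne : Aᶜ.Nonempty := by
    rw [← Finset.card_pos, Finset.card_compl, hAcard]
    simp only [Fintype.card_fin]
    omega
  -- Part (i)(a): every feasible point has value at most r_A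
  have partA : ∀ θ : Vec d, GapFeas P X A θ →
      ENNReal.ofReal (∑ k ∈ A, θ k) ≤ rOf P X (WGap A) := by
    rintro θ ⟨hdom, hcgf, hsum, hp, hn⟩
    simp only [rOf]
    refine le_iInf₂ fun x hxW => ?_
    have hkey := gap_key A hAne' hAcne θ x hsum hp hn (c := 1)
      (fun k hk k' hk' => (hxW k hk k' hk').le)
    calc ENNReal.ofReal (∑ k ∈ A, θ k)
        ≤ ENNReal.ofReal ⟪θ, x⟫ := ENNReal.ofReal_le_ofReal (by linarith)
      _ ≤ rate P X x := by
          simp only [rate]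
          exact le_iSup_of_le θ (le_iSup_of_le ⟨hdom, hcgf⟩ le_rfl)
  obtain ⟨hβdom, hβcgf, hβ3, hβ4⟩ := hβA
  -- a point of W^A
  set x0 : Vec d := (WithLp.equiv 2 (Fin d → ℝ)).symm (fun k => if k ∈ A then (2:ℝ) else 0)
    with hx0def
  have hx0 : x0 ∈ WGap A := by
    intro k hk k' hk'
    simp only [hx0def, WithLp.equiv_symm_apply, PiLp.toLp_apply, WithLp.ofLp_toLp, if_pos hk, if_neg hk']
    norm_num
  have hne : rOf P X (WGap A) ≠ ⊤ := by
    intro htop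
    have h := hβ3 x0 hx0
    rw [htop, EReal.coe_ennreal_top, top_le_iff] at h
    exact EReal.coe_ne_top _ h
  set r := (rOf P X (WGap A)).toReal with hrdef
  have hrnn : 0 ≤ r := ENNReal.toReal_nonneg
  have hcast : ((rOf P X (WGap A) : ℝ≥0∞) : EReal) = (r : EReal) := by
    rw [← ENNReal.ofReal_toReal hne, ← hrdef, EReal.coe_ennreal_ofReal, max_eq_left hrnn]
  have hr : ∀ v ∈ WGap A, r ≤ ⟪βA, v⟫ := fun v hv => EReal.coe_le_coe_iff.mp (hcast ▸ hβ3 v hv)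
  have hray : ∀ u : Vec d, (∀ t : ℝ, 0 ≤ t → x0 + t • u ∈ WGap A) → 0 ≤ ⟪βA, u⟫ := by
    intro u hu
    refine slope_nonneg (r := r) (c := ⟪βA, x0⟫) fun t ht => ?_
    have h := hr _ (hu t ht)
    rwa [inner_add_right, real_inner_smul_right] at h
  -- signs on A
  have hsignA : ∀ k ∈ A, 0 ≤ βA k := by
    intro k hk
    have h := hray ((WithLp.equiv 2 (Fin d → ℝ)).symm (fun j => if j = k then (1:ℝ) else 0)) ?_
    · have he : ⟪βA, ((WithLp.equiv 2 (Fin d → ℝ)).symm (fun j => if j = k then (1:ℝ) else 0) :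
          Vec d)⟫ = βA k := by
        simp [PiLp.inner_apply, WithLp.equiv_symm_apply, PiLp.toLp_apply, WithLp.ofLp_toLp, mul_ite]
      rwa [he] at h
    · intro t ht j hj j' hj'
      have hj'k : j' ≠ k := fun h' => hj' (h' ▸ hk)
      simp only [hx0def, PiLp.add_apply, PiLp.smul_apply, WithLp.equiv_symm_apply, PiLp.toLp_apply, WithLp.ofLp_toLp,
        smul_eq_mul, if_pos hj, if_neg hj', if_neg hj'k]
      split_ifs <;> nlinarith
  -- signs off A
  have hsignAc : ∀ k ∉ A, βA k ≤ 0 := by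
    intro k hk
    have h := hray ((WithLp.equiv 2 (Fin d → ℝ)).symm (fun j => if j = k then (-1:ℝ) else 0)) ?_
    · have he : ⟪βA, ((WithLp.equiv 2 (Fin d → ℝ)).symm (fun j => if j = k then (-1:ℝ) else 0) :
          Vec d)⟫ = -βA k := by
        simp [PiLp.inner_apply, WithLp.equiv_symm_apply, PiLp.toLp_apply, WithLp.ofLp_toLp, mul_ite]
      rw [he] at h
      linarith
    · intro t ht j hj j' hj'
      have hjk : j ≠ k := fun h' => hk (h' ▸ hj)
      simp only [hx0def, PiLp.add_apply, PiLp.smul_apply, WithLp.equiv_symm_apply, PiLp.toLp_apply, WithLp.ofLp_toLp,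
        smul_eq_mul, if_pos hj, if_neg hj', if_neg hjk]
      split_ifs <;> nlinarith
  -- sum zero
  have hones : ∀ s : ℝ, ∀ t : ℝ, 0 ≤ t →
      x0 + t • ((WithLp.equiv 2 (Fin d → ℝ)).symm (fun _ => s) : Vec d) ∈ WGap A := by
    intro s t ht j hj j' hj'
    simp only [hx0def, PiLp.add_apply, PiLp.smul_apply, WithLp.equiv_symm_apply, PiLp.toLp_apply, WithLp.ofLp_toLp,
      smul_eq_mul, if_pos hj, if_neg hj']
    norm_num
  have hinner1 : ∀ s : ℝ, ⟪βA, ((WithLp.equiv 2 (Fin d → ℝ)).symm (fun _ => s) : Vec d)⟫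
      = s * ∑ i, βA i := by
    intro s
    simp [PiLp.inner_apply, WithLp.equiv_symm_apply, PiLp.toLp_apply, WithLp.ofLp_toLp, mul_comm, Finset.mul_sum]
  have hsum0 : ∑ i, βA i = 0 := by
    have h1 := hray _ (hones 1)
    have h2 := hray _ (hones (-1))
    rw [hinner1 1] at h1
    rw [hinner1 (-1)] at h2
    linarith
  have hfeas : GapFeas P X A βA := ⟨hβdom, le_of_eq hβcgf, hsum0, hsignA, hsignAc⟩
  -- optimality of βA
  set T := ∑ k ∈ A, βA k with hTdef
  have hTnn : 0 ≤ T := Finset.sum_nonneg hsignA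
  have hcomplβ : ∑ k ∈ Aᶜ, βA k = -T := by
    have h2 := Finset.sum_add_sum_compl A βA
    rw [hsum0] at h2; linarith
  have hεb : ∀ ε : ℝ, 0 < ε → r ≤ (1 + 2*ε) * T := by
    intro ε hε
    set xε : Vec d := (WithLp.equiv 2 (Fin d → ℝ)).symm
      (fun k => if k ∈ A then 1 + ε else -ε) with hxεdef
    have hxε : xε ∈ WGap A := by
      intro k hk k' hk'
      simp only [hxεdef, WithLp.equiv_symm_apply, PiLp.toLp_apply, WithLp.ofLp_toLp, if_pos hk, if_neg hk']
      linarith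
    have h := hr xε hxε
    have hi : ⟪βA, xε⟫ = ∑ i, βA i * xε i := by simp [PiLp.inner_apply, mul_comm]
    have e1 : ∀ j ∈ A, βA j * xε j = βA j * (1 + ε) := by
      intro j hj; simp [hxεdef, WithLp.equiv_symm_apply, PiLp.toLp_apply, WithLp.ofLp_toLp, if_pos hj]
    have e2 : ∀ j ∈ Aᶜ, βA j * xε j = βA j * (-ε) := by
      intro j hj
      simp [hxεdef, WithLp.equiv_symm_apply, PiLp.toLp_apply, WithLp.ofLp_toLp, if_neg (Finset.mem_compl.mp hj)]
    have hval : ⟪βA, xε⟫ = (1 + 2*ε) * T := by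
      rw [hi, ← Finset.sum_add_sum_compl A, Finset.sum_congr rfl e1, Finset.sum_congr rfl e2,
        ← Finset.sum_mul, ← Finset.sum_mul, ← hTdef, hcomplβ]
      ring
    rw [hval] at h
    exact h
  have hrT : r ≤ T := by
    by_contra hlt
    push_neg at hlt
    rcases eq_or_lt_of_le hTnn with h0 | h0
    · have h := hεb 1 one_pos
      rw [← h0] at h
      rw [← h0] at hlt
      linarith
    · have h := hεb ((r - T) / (4*T)) (div_pos (by linarith) (by linarith))
      have h4 : (1 + 2 * ((r - T) / (4*T))) * T = T + (r - T)/2 := by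
        field_simp; ring
      rw [h4] at h
      linarith
  have hopt : ENNReal.ofReal (∑ k ∈ A, βA k) = rOf P X (WGap A) := by
    refine le_antisymm (partA βA hfeas) ?_
    rw [← ENNReal.ofReal_toReal hne, ← hrdef]
    exact ENNReal.ofReal_le_ofReal hrT
  refine ⟨⟨partA, hfeas, hopt⟩, ?_⟩
  -- Part (ii)
  intro γ hγd hγc θ hθd hθc hsum hp hn
  simp only [vOf]
  refine le_iInf₂ fun x hx => ?_
  have hxw : ∀ k ∈ A, ∀ k' ∉ A, 1 ≤ x k - x k' := by
    intro k hk k' hk'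
    have hcl : closure (WGap A) ⊆ {y : Vec d | 1 ≤ y k - y k'} := by
      refine closure_minimal (fun y hy => (hy k hk k' hk').le) ?_
      exact isClosed_le continuous_const
        (((EuclideanSpace.proj k (𝕜 := ℝ)).continuous).sub
          ((EuclideanSpace.proj k' (𝕜 := ℝ)).continuous))
    exact hcl hx
  have hkey := gap_key A hAne' hAcne θ x hsum hp hn (c := 1) hxw
  have hTnn' : 0 ≤ ∑ k ∈ A, θ k := Finset.sum_nonneg hp
  calc ((ENNReal.ofReal (∑ k ∈ A, θ k) : ℝ≥0∞) : EReal)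
      = ((∑ k ∈ A, θ k : ℝ) : EReal) := by
        rw [EReal.coe_ennreal_ofReal, max_eq_left hTnn']
    _ ≤ ((⟪θ, x⟫ : ℝ) : EReal) := EReal.coe_le_coe_iff.mpr (by linarith)
    _ ≤ Vfun P X γ x := by
        simp only [Vfun]
        exact le_iSup_of_le θ (le_iSup_of_le ⟨hγd, hθd, add_nonpos hγc hθc⟩ le_rfl)


end Paper
end
end

section
/- In the gap-rule setting with correlated normal increments — X_1 multivariate normal with E[X_{1,k}] = μ_+ > 0 for k ∈ [m], E[X_{1,k}] = μ_- < 0 for k ∉ [m], Var(X_{1,k}) = σ² and Cov(X_{1,k},X_{1,k'}) = σ²ρ for k ≠ k', where σ² > 0 and ρ ∈ [0,1) — for any ℓ ∈ [m] and ℓ' ∉ [m], setting A := ([m]\{ℓ}) ∪ {ℓ'}, one has r_A = z̃_{ℓ,ℓ'} and β^A = γ̃^{ℓ,ℓ'}; explicitly, γ̃^{ℓ,ℓ'}_ℓ = −(μ_+ − μ_-)/(σ²(1−ρ)), γ̃^{ℓ,ℓ'}_{ℓ'} = (μ_+ − μ_-)/(σ²(1−ρ)), and γ̃^{ℓ,ℓ'}_k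 = 0 for k ∉ {ℓ,ℓ'}. -/
open MeasureTheory ProbabilityTheory Filter Set Topology
open scoped ENNReal Pointwise RealInnerProductSpace Classical

noncomputable section

namespace Paper

variable {d : ℕ}

variable {Ω : Type*} [MeasurableSpace Ω]

variable {J : ℕ}

private lemma sum_pair_support' {d : ℕ} {l l' : Fin d} (h : l ≠ l') (f : Fin d → ℝ)
    (hf : ∀ k, k ≠ l → k ≠ l' → f k = 0) : ∑ k, f k = f l + f l' := by
  rw [← Finset.sum_pair h]
  refine (Finset.sum_subset (Finset.subset_univ _) fun k _ hk => ?_).symm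
  simp only [Finset.mem_insert, Finset.mem_singleton, not_or] at hk
  exact hf k hk.1 hk.2

private lemma le_of_forall_eps_mul' {a b K : ℝ} (h : ∀ ε : ℝ, 0 < ε → a ≤ b + ε * K) :
    a ≤ b := by
  by_contra hc
  push_neg at hc
  have hK1 : (0:ℝ) < |K| + 1 := by positivity
  have hεpos : 0 < (a - b) / (2 * (|K| + 1)) := by
    apply div_pos (by linarith) (by positivity)
  have h1 := h _ hεpos
  have h2 : (a - b) / (2 * (|K| + 1)) * K ≤ (a - b) / (2 * (|K| + 1)) * (|K| + 1) := by
    apply mul_le_mul_of_nonneg_left _ hεpos.le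
    linarith [le_abs_self K]
  have h3 : (a - b) / (2 * (|K| + 1)) * (|K| + 1) = (a - b) / 2 := by
    field_simp
  linarith

private lemma inner_toSum' {d : ℕ} (x y : Vec d) : ⟪x, y⟫ = ∑ k, x k * y k := by
  simp [PiLp.inner_apply, RCLike.inner_apply, conj_trivial]
  exact Finset.sum_congr rfl fun _ _ => mul_comm _ _


private lemma key_ineq' {σ2 ρ c μp μm tl tl' M Q T : ℝ} (hσ2 : 0 < σ2) (hρ0 : 0 ≤ ρ)
    (hρ1 : ρ < 1) (hDc : μp - μm = σ2 * (1 - ρ) * c)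
    (hθ : M + 1/2 * (σ2 * ((1 - ρ) * Q + ρ * T ^ 2)) ≤ 0)
    (hQ : tl ^ 2 + tl' ^ 2 ≤ Q) :
    M + (tl' - tl) * (μp - μm) ≤ c * (μp - μm) := by
  have hs : 0 < σ2 * (1 - ρ) := by nlinarith
  rw [hDc]
  nlinarith [mul_nonneg hs.le (sq_nonneg (tl' - c)), mul_nonneg hs.le (sq_nonneg (tl + c)),
    mul_nonneg hs.le (sub_nonneg.2 hQ), mul_nonneg (mul_nonneg hσ2.le hρ0) (sq_nonneg T)]

private lemma zle' {σ2 ρ c μp μm u : ℝ} (hσ2 : 0 < σ2) (hρ0 : 0 ≤ ρ) (hρ1 : ρ < 1)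
    (hcpos : 0 < c) (hDc : μp - μm = σ2 * (1 - ρ) * c)
    (h : -u * μp + u * μm + 1/2 * (σ2 * ((1 - ρ) * ((-u) ^ 2 + u ^ 2) + ρ * (0:ℝ) ^ 2)) ≤ 0)
    (hu : 0 ≤ u) : u ≤ c := by
  have hs : 0 < σ2 * (1 - ρ) := by nlinarith
  by_contra hcon
  push_neg at hcon
  have h0 : 0 < u := lt_trans hcpos hcon
  have h'' : u * (μp - μm) = u * (σ2 * (1 - ρ) * c) := by rw [hDc]
  nlinarith [h'', mul_pos hs (mul_pos h0 (sub_pos.2 hcon))]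

private lemma pin' {σ2 ρ c a b Q : ℝ} (hs : 0 < σ2 * (1 - ρ))
    (h0 : σ2 * (1 - ρ) * c * (c + a - b) + 1/2 * (σ2 * ((1 - ρ) * Q)) = 0)
    (hQ : a ^ 2 + b ^ 2 ≤ Q) (hb : b ≤ c) (ha : -c ≤ a) :
    b = c ∧ a = -c ∧ Q = 2 * c ^ 2 := by
  have h4' : σ2 * (1 - ρ) * ((b - c) ^ 2 + (a + c) ^ 2) ≤ 0 := by
    nlinarith [h0, mul_le_mul_of_nonneg_left hQ hs.le]
  have h5 : (b - c) ^ 2 + (a + c) ^ 2 ≤ 0 := by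
    have := (mul_le_mul_iff_right₀ hs).mp
      (by linarith : σ2 * (1 - ρ) * ((b - c) ^ 2 + (a + c) ^ 2) ≤ σ2 * (1 - ρ) * 0)
    linarith
  have hb' : b = c := by
    have e1 : (b - c) ^ 2 = 0 :=
      le_antisymm (by linarith [sq_nonneg (a + c)]) (sq_nonneg _)
    have := sq_eq_zero_iff.mp e1
    linarith
  have ha' : a = -c := by
    have e1 : (a + c) ^ 2 = 0 :=
      le_antisymm (by linarith [sq_nonneg (b - c)]) (sq_nonneg _)
    have := sq_eq_zero_iff.mp e1
    linarith
  refine ⟨hb', ha', ?_⟩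
  rw [hb', ha'] at h0
  have h6 : σ2 * (1 - ρ) * (Q - 2 * c ^ 2) = 0 := by linear_combination 2 * h0
  have h7 := (mul_eq_zero.mp h6).resolve_left (ne_of_gt hs)
  linarith

set_option maxHeartbeats 1000000 in
theorem statement13
    {d : ℕ} {Ω : Type*} [MeasurableSpace Ω] (P : Measure Ω) (X : ℕ → Ω → Vec d)
    (m : ℕ) (hm2 : 2 ≤ m) (hmd : m + 2 ≤ d)
    (hiid : IIDWalk P X)
    (μp μm σ2 ρ : ℝ) (hμp : 0 < μp) (hμm : μm < 0) (hσ2 : 0 < σ2)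
    (hρ0 : 0 ≤ ρ) (hρ1 : ρ < 1)
    -- `X₁` is multivariate normal with the given mean and covariance structure,
    -- characterized through its cumulant generating function
    (hmean : ∀ k : Fin d, ∫ ω, X 0 ω k ∂P = if (k : ℕ) < m then μp else μm)
    (hcgf : ∀ θ : Vec d, InDom P X θ ∧
      cgf P X θ =
        (∑ k : Fin d, θ k * (if (k : ℕ) < m then μp else μm)) +
          (1 / 2) * (σ2 * ((1 - ρ) * ∑ k : Fin d, (θ k) ^ 2 + ρ * (∑ k : Fin d, θ k) ^ 2))
    )
    (l l' : Fin d) (hl : (l : ℕ) < m) (hl' : m ≤ (l' : ℕ))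
    (βA : Vec d) (hβA : IsOptTilt P X (WGap (GapSwap d m l l')) βA)
    (zt : ℝ) (γt : Vec d) (hzt : IsGapOpt2 P X l l' zt γt) :
    rOf P X (WGap (GapSwap d m l l')) = ENNReal.ofReal zt ∧
    βA = γt ∧
    γt l = -((μp - μm) / (σ2 * (1 - ρ))) ∧
    γt l' = (μp - μm) / (σ2 * (1 - ρ)) ∧
    ∀ k : Fin d, k ≠ l → k ≠ l' → γt k = 0 := by
  classical
  obtain ⟨⟨hγdom, hγcgf, hγsum, hγl, hγl', hγsupp⟩, hγval, hγopt⟩ := hzt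
  obtain ⟨hβdom, hβcgf, hβlow, hβhigh⟩ := hβA
  have hs : 0 < σ2 * (1 - ρ) := by nlinarith
  set c : ℝ := (μp - μm) / (σ2 * (1 - ρ)) with hc_def
  have hD : 0 < μp - μm := by linarith
  have hcpos : 0 < c := div_pos hD hs
  have hDc : μp - μm = σ2 * (1 - ρ) * c := by rw [hc_def]; field_simp; rw [div_self (sub_pos.2 hρ1).ne']
  have hll' : l ≠ l' := by
    intro h; rw [h] at hl; omega
  set A : Finset (Fin d) := GapSwap d m l l' with hA_def
  have hmemA : ∀ k : Fin d, k ∈ A ↔ (k = l' ∨ ((k : ℕ) < m ∧ k ≠ l)) := by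
    intro k
    simp [hA_def, GapSwap, Im, Finset.mem_insert, Finset.mem_sdiff, Finset.mem_filter,
      Finset.mem_singleton]
  have hl'A : l' ∈ A := (hmemA l').2 (Or.inl rfl)
  have hlA : l ∉ A := by
    rw [hmemA]
    simp [hll']
  have hl'm : ¬ ((l' : ℕ) < m) := by omega
  set mv : Fin d → ℝ := fun k => if (k : ℕ) < m then μp else μm with hmv_def
  set vst : Fin d → ℝ := fun k => if k ∈ A then μp else μm with hvst_def
  have hvl' : vst l' = μp := by simp [hvst_def, hl'A]
  have hvl : vst l = μm := by simp [hvst_def, hlA]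
  have hmvl' : mv l' = μm := by simp [hmv_def, hl'm]
  have hmvl : mv l = μp := by simp [hmv_def, hl]
  have h_agree : ∀ k : Fin d, k ≠ l → k ≠ l' → vst k = mv k := by
    intro k h1 h2
    by_cases hk : (k : ℕ) < m
    · have : k ∈ A := (hmemA k).2 (Or.inr ⟨hk, h1⟩)
      simp [hvst_def, hmv_def, this, hk]
    · have : k ∉ A := by
        rw [hmemA]; push_neg; exact ⟨h2, fun h => absurd h hk⟩
      simp [hvst_def, hmv_def, this, hk]
  -- the key inequality: for feasible θ, θ · vst ≤ c * (μp - μm)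
  have key : ∀ θ : Vec d, cgf P X θ ≤ 0 → ∑ k, θ k * vst k ≤ c * (μp - μm) := by
    intro θ hθ
    rw [(hcgf θ).2] at hθ
    have hdiff : ∑ k, (θ k * vst k - θ k * mv k) = (θ l' - θ l) * (μp - μm) := by
      rw [sum_pair_support' hll' _ (fun k h1 h2 => by rw [h_agree k h1 h2]; ring)]
      rw [hvl, hvl', hmvl, hmvl']
      ring
    have hsum_eq : ∑ k, θ k * vst k
        = (∑ k, θ k * mv k) + (θ l' - θ l) * (μp - μm) := by
      rw [← hdiff, Finset.sum_sub_distrib]; ring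
    have hQ : θ l ^ 2 + θ l' ^ 2 ≤ ∑ k, θ k ^ 2 := by
      calc θ l ^ 2 + θ l' ^ 2 = ∑ k ∈ ({l, l'} : Finset (Fin d)), θ k ^ 2 := by
            rw [Finset.sum_pair hll']
        _ ≤ ∑ k, θ k ^ 2 := Finset.sum_le_sum_of_subset_of_nonneg (Finset.subset_univ _)
            (fun k _ _ => sq_nonneg _)
    rw [hsum_eq]
    exact key_ineq' hσ2 hρ0 hρ1 hDc hθ hQ
  -- the candidate optimizer θ*
  set θstar : Vec d := WithLp.toLp 2 (fun k => if k = l' then c else if k = l then -c else 0 : Fin d → ℝ)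
    with hθstar_def
  have hθstar_l : θstar l = -c := by simp [hθstar_def, hll']
  have hθstar_l' : θstar l' = c := by simp [hθstar_def]
  have hθstar_supp : ∀ k, k ≠ l → k ≠ l' → θstar k = 0 := by
    intro k h1 h2; simp [hθstar_def, h1, h2]
  have hθstar_cgf : cgf P X θstar = 0 := by
    rw [(hcgf θstar).2]
    have h1 : ∑ k, θstar k * mv k = (-c) * μp + c * μm := by
      rw [sum_pair_support' hll' _ (fun k h1 h2 => by rw [hθstar_supp k h1 h2]; ring)]
      rw [hθstar_l, hθstar_l', hmvl, hmvl']
    have h2 : ∑ k, θstar k ^ 2 = c ^ 2 + c ^ 2 := by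
      rw [sum_pair_support' hll' _ (fun k h1 h2 => by rw [hθstar_supp k h1 h2]; ring)]
      rw [hθstar_l, hθstar_l']; ring
    have h3 : ∑ k, θstar k = 0 := by
      rw [sum_pair_support' hll' _ (fun k h1 h2 => hθstar_supp k h1 h2)]
      rw [hθstar_l, hθstar_l']; ring
    rw [h1, h2, h3]
    linear_combination (-c) * hDc
  have hθstar_feas : GapFeas2 P X l l' θstar := by
    refine ⟨(hcgf θstar).1, le_of_eq hθstar_cgf, ?_, ?_, ?_, hθstar_supp⟩
    · rw [hθstar_l, hθstar_l']; ring
    · rw [hθstar_l]; linarith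
    · rw [hθstar_l']; linarith
  -- γt explicit form
  have hγform : γt l = -(γt l') := by linarith
  have hγcgf_ineq : γt l * μp + γt l' * μm
      + (1/2) * (σ2 * ((1 - ρ) * (γt l ^ 2 + γt l' ^ 2) + ρ * (0:ℝ) ^ 2)) ≤ 0 := by
    have h1 : ∑ k, γt k * mv k = γt l * μp + γt l' * μm := by
      rw [sum_pair_support' hll' _ (fun k h1 h2 => by rw [hγsupp k h1 h2]; ring)]
      rw [hmvl, hmvl']
    have h2 : ∑ k, γt k ^ 2 = γt l ^ 2 + γt l' ^ 2 := by
      rw [sum_pair_support' hll' _ (fun k h1 h2 => by rw [hγsupp k h1 h2]; ring)]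
    have h3 : ∑ k, γt k = 0 := by
      rw [sum_pair_support' hll' _ (fun k h1 h2 => hγsupp k h1 h2)]
      linarith
    have := hγcgf
    rw [(hcgf γt).2, h1, h2, h3] at this
    simpa using this
  have hzt_le : zt ≤ c := by
    rw [← hγval]
    rw [hγform] at hγcgf_ineq
    exact zle' hσ2 hρ0 hρ1 hcpos hDc (by linarith [hγcgf_ineq]) hγl'
  have hzt_ge : c ≤ zt := by
    have := hγopt θstar hθstar_feas
    rwa [hθstar_l'] at this
  have hztc : zt = c := le_antisymm hzt_le hzt_ge
  have hγl'c : γt l' = c := by rw [hγval, hztc]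
  have hγlc : γt l = -c := by rw [hγform, hγl'c]
  -- lower bound for rOf
  have hrate_ge : ∀ x ∈ WGap A, ENNReal.ofReal c ≤ rate P X x := by
    intro x hx
    have hgap : 1 < x l' - x l := hx l' hl'A l hlA
    have h1 : c ≤ ⟪γt, x⟫ := by
      rw [inner_toSum']
      rw [sum_pair_support' hll' _ (fun k h1 h2 => by rw [hγsupp k h1 h2]; ring)]
      rw [hγlc, hγl'c]
      have := mul_lt_mul_of_pos_left hgap hcpos
      linarith
    calc ENNReal.ofReal c ≤ ENNReal.ofReal ⟪γt, x⟫ := ENNReal.ofReal_le_ofReal h1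
      _ ≤ rate P X x := le_iSup₂ (f := fun θ (_ : θ ∈ {θ : Vec d | InDom P X θ ∧ cgf P X θ ≤ 0})
            => ENNReal.ofReal ⟪θ, x⟫) γt ⟨hγdom, hγcgf⟩
  have hrOf_ge : ENNReal.ofReal c ≤ rOf P X (WGap A) := le_iInf₂ hrate_ge
  -- upper bound for the rate at scaled points
  have hrate_le : ∀ t : ℝ, 0 < t →
      rate P X (WithLp.toLp 2 (fun k => t * vst k : Fin d → ℝ) : Vec d)
        ≤ ENNReal.ofReal (t * (c * (μp - μm))) := by
    intro t ht
    apply iSup₂_le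
    rintro θ ⟨_, hθcgf⟩
    apply ENNReal.ofReal_le_ofReal
    rw [inner_toSum']
    have h1 : ∑ k, θ k * (t * vst k) = t * ∑ k, θ k * vst k := by
      rw [Finset.mul_sum]
      exact Finset.sum_congr rfl fun k _ => by ring
    calc ∑ k, θ k * (t * vst k) = t * ∑ k, θ k * vst k := h1
      _ ≤ t * (c * (μp - μm)) := mul_le_mul_of_nonneg_left (key θ hθcgf) ht.le
  have hmemW : ∀ t : ℝ, 1 < t * (μp - μm) →
      (WithLp.toLp 2 (fun k => t * vst k : Fin d → ℝ) : Vec d) ∈ WGap A := by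
    intro t ht k hk k' hk'
    have h1 : vst k = μp := by simp [hvst_def, hk]
    have h2 : vst k' = μm := by simp [hvst_def, hk']
    show (1:ℝ) < t * vst k - t * vst k'
    rw [h1, h2]
    have : t * (μp - μm) = t * μp - t * μm := by ring
    linarith
  have hrOf_le : rOf P X (WGap A) ≤ ENNReal.ofReal c := by
    refine ENNReal.le_of_forall_pos_le_add fun ε hε _ => ?_
    have hepos : (0:ℝ) < (ε:ℝ) := by exact_mod_cast hε
    set t : ℝ := (c + (ε:ℝ)) / (c * (μp - μm)) with ht_def
    have htpos : 0 < t := div_pos (by linarith) (by positivity)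
    have h2 : 1 < t * (μp - μm) := by
      rw [ht_def]
      rw [div_mul_eq_mul_div, lt_div_iff₀ (by positivity)]
      nlinarith [mul_pos hepos hD]
    have h3 : t * (c * (μp - μm)) = c + (ε:ℝ) := by
      rw [ht_def]; field_simp
    calc rOf P X (WGap A) ≤ rate P X (WithLp.toLp 2 (fun k => t * vst k : Fin d → ℝ) : Vec d) :=
          iInf₂_le _ (hmemW t h2)
      _ ≤ ENNReal.ofReal (t * (c * (μp - μm))) := hrate_le t htpos
      _ = ENNReal.ofReal c + ε := by
          rw [h3, ENNReal.ofReal_add hcpos.le hepos.le, ENNReal.ofReal_coe_nnreal]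
  have hrOf : rOf P X (WGap A) = ENNReal.ofReal c := le_antisymm hrOf_le hrOf_ge
  -- translate the EReal facts about βA
  have hcoe : ((rOf P X (WGap A) : ℝ≥0∞) : EReal) = ((c : ℝ) : EReal) := by
    rw [hrOf, EReal.coe_ennreal_ofReal, max_eq_left hcpos.le]
  have hlow : ∀ v ∈ WGap A, c ≤ ⟪βA, v⟫ := by
    intro v hv
    have := hβlow v hv
    rw [hcoe] at this
    exact_mod_cast this
  -- βA · xstar ≤ c where xstar = vst / (μp - μm)
  have hxstar_rate : rate P X (WithLp.toLp 2 (fun k => (1/(μp - μm)) * vst k : Fin d → ℝ) : Vec d)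
      ≤ rOf P X (WGap A) := by
    rw [hrOf]
    have := hrate_le (1/(μp - μm)) (by positivity)
    have heq : (1/(μp - μm)) * (c * (μp - μm)) = c := by field_simp
    rwa [heq] at this
  have hbx_le : ∑ k, βA k * ((1/(μp - μm)) * vst k) ≤ c := by
    have := hβhigh _ hxstar_rate
    rw [hcoe] at this
    have h2 : ⟪βA, (WithLp.toLp 2 (fun k => (1/(μp - μm)) * vst k : Fin d → ℝ) : Vec d)⟫ ≤ c := by
      exact_mod_cast this
    rwa [inner_toSum'] at h2
  -- closure of the lower bound: for any w with nonnegative gaps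
  have hclose : ∀ w : Fin d → ℝ, (∀ k ∈ A, ∀ k' ∉ A, 0 ≤ w k - w k') →
      c ≤ (∑ k, βA k * ((1/(μp - μm)) * vst k)) + ∑ k, βA k * w k := by
    intro w hw
    apply le_of_forall_eps_mul' (K := ∑ k, βA k * (if k ∈ A then (1:ℝ) else 0))
    intro ε hε
    have hv : (WithLp.toLp 2 (fun k => (1/(μp - μm)) * vst k + w k + ε * (if k ∈ A then (1:ℝ) else 0)
        : Fin d → ℝ) : Vec d) ∈ WGap A := by
      intro k hk k' hk'
      have h1 : vst k = μp := by simp [hvst_def, hk]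
      have h2 : vst k' = μm := by simp [hvst_def, hk']
      show (1:ℝ) < ((1/(μp - μm)) * vst k + w k + ε * (if k ∈ A then (1:ℝ) else 0))
        - ((1/(μp - μm)) * vst k' + w k' + ε * (if k' ∈ A then (1:ℝ) else 0))
      rw [h1, h2, if_pos hk, if_neg hk']
      have h3 : (1/(μp - μm)) * μp - (1/(μp - μm)) * μm = 1 := by field_simp
      have h4 := hw k hk k' hk'
      simp only [mul_one, mul_zero]
      linarith
    have h5 := hlow _ hv
    rw [inner_toSum'] at h5
    have h6 : ∑ k, βA k * ((1/(μp - μm)) * vst k + w k + ε * (if k ∈ A then (1:ℝ) else 0))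
        = (∑ k, βA k * ((1/(μp - μm)) * vst k)) + (∑ k, βA k * w k)
          + ε * ∑ k, βA k * (if k ∈ A then (1:ℝ) else 0) := by
      rw [Finset.mul_sum, ← Finset.sum_add_distrib, ← Finset.sum_add_distrib]
      exact Finset.sum_congr rfl fun k _ => by ring
    rw [h6] at h5
    linarith
  -- specialize to get structure of βA
  have hB_ge : c ≤ ∑ k, βA k * ((1/(μp - μm)) * vst k) := by
    have := hclose (fun _ => 0) (fun k _ k' _ => by simp)
    simpa using this
  have hB : ∑ k, βA k * ((1/(μp - μm)) * vst k) = c := le_antisymm hbx_le hB_ge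
  have hT0 : ∑ k, βA k = 0 := by
    have h1 := hclose (fun _ => 1) (fun k _ k' _ => by simp)
    have h2 := hclose (fun _ => -1) (fun k _ k' _ => by simp)
    simp only [mul_one, mul_neg_one] at h1 h2
    rw [hB] at h1 h2
    have h3 : ∑ k, -βA k = -∑ k, βA k := by rw [Finset.sum_neg_distrib]
    rw [h3] at h2
    linarith
  have hβnn : ∀ j ∈ A, 0 ≤ βA j := by
    intro j hj
    have h1 := hclose (fun k => if k = j then 1 else 0) ?_
    · rw [hB] at h1
      have h2 : ∑ k, βA k * (if k = j then (1:ℝ) else 0) = βA j := by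
        simp [mul_ite]
      rw [h2] at h1
      linarith
    · intro k _ k' hk'
      have : k' ≠ j := fun h => hk' (h ▸ hj)
      by_cases hkj : k = j <;> simp [hkj, this]
  have hβnp : ∀ j ∉ A, βA j ≤ 0 := by
    intro j hj
    have h1 := hclose (fun k => if k = j then -1 else 0) ?_
    · rw [hB] at h1
      have h2 : ∑ k, βA k * (if k = j then (-1:ℝ) else 0) = -βA j := by
        simp [mul_ite]
      rw [h2] at h1
      linarith
    · intro k hk k' _
      have : k ≠ j := fun h => hj (h ▸ hk)
      by_cases hkj : k' = j <;> simp [hkj, this]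
  -- ∑_{k ∈ A} βA k = c
  have hvst_decomp : ∀ k, vst k = μm + (if k ∈ A then μp - μm else 0) := by
    intro k
    by_cases hk : k ∈ A <;> simp [hvst_def, hk]
  have hSA : ∑ k ∈ A, βA k = c := by
    have h1 : ∑ k, βA k * vst k = μm * (∑ k, βA k) + (μp - μm) * ∑ k ∈ A, βA k := by
      have e1 : ∀ k : Fin d, βA k * vst k
          = μm * βA k + (if k ∈ A then (μp - μm) * βA k else 0) := by
        intro k
        by_cases hk : k ∈ A <;> simp [hvst_def, hk] <;> ring
      rw [Finset.sum_congr rfl fun k _ => e1 k, Finset.sum_add_distrib, Fintype.sum_ite_mem,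
        ← Finset.mul_sum, ← Finset.mul_sum]
    have h2 : ∑ k, βA k * ((1/(μp - μm)) * vst k) = (1/(μp - μm)) * ∑ k, βA k * vst k := by
      rw [Finset.mul_sum]
      exact Finset.sum_congr rfl fun k _ => by ring
    rw [h2, h1, hT0] at hB
    field_simp at hB
    have := mul_left_cancel₀ hD.ne' (by linarith [hB] : (μp - μm) * ∑ k ∈ A, βA k = (μp - μm) * c)
    linarith
  -- ∑_{k ∈ Im} βA k = c + βA l - βA l'
  have hSI : ∑ k ∈ Im d m, βA k = c + βA l - βA l' := by
    have hg : ∀ k : Fin d, k ≠ l → k ≠ l' →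
        ((if k ∈ Im d m then βA k else 0) - (if k ∈ A then βA k else 0)) = 0 := by
      intro k h1 h2
      have hIm : k ∈ Im d m ↔ (k : ℕ) < m := by simp [Im]
      by_cases hk : (k : ℕ) < m
      · have hkA : k ∈ A := (hmemA k).2 (Or.inr ⟨hk, h1⟩)
        simp [hIm.2 hk, hkA]
      · have hkA : k ∉ A := by
          rw [hmemA]; push_neg; exact ⟨h2, fun h => absurd h hk⟩
        have hkI : k ∉ Im d m := fun h => hk (hIm.1 h)
        simp [hkI, hkA]
    have hlIm : l ∈ Im d m := by simp [Im, hl]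
    have hl'Im : l' ∉ Im d m := by simp [Im, hl'm]
    have h1 : ∑ k, ((if k ∈ Im d m then βA k else 0) - (if k ∈ A then βA k else 0))
        = βA l - βA l' := by
      rw [sum_pair_support' hll' _ hg]
      simp only [if_pos hlIm, if_neg hl'Im, if_pos hl'A, if_neg hlA]
      ring
    rw [Finset.sum_sub_distrib, Fintype.sum_ite_mem, Fintype.sum_ite_mem, hSA] at h1
    linarith
  -- bounds on βA l and βA l'
  have hβl'_le : βA l' ≤ c := by
    have h1 : ∑ k ∈ A.erase l', βA k + βA l' = ∑ k ∈ A, βA k := Finset.sum_erase_add A _ hl'A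
    have h2 : 0 ≤ ∑ k ∈ A.erase l', βA k :=
      Finset.sum_nonneg fun k hk => hβnn k (Finset.mem_of_mem_erase hk)
    rw [hSA] at h1
    linarith
  have hβl_ge : -c ≤ βA l := by
    have hsd := Finset.sum_sdiff (f := fun k => βA k) (Finset.subset_univ A)
    rw [hSA, hT0] at hsd
    have hlmem : l ∈ Finset.univ \ A := Finset.mem_sdiff.2 ⟨Finset.mem_univ l, hlA⟩
    have h1 : ∑ k ∈ (Finset.univ \ A).erase l, βA k + βA l = ∑ k ∈ Finset.univ \ A, βA k :=
      Finset.sum_erase_add _ _ hlmem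
    have h2 : ∑ k ∈ (Finset.univ \ A).erase l, βA k ≤ 0 :=
      Finset.sum_nonpos fun k hk =>
        hβnp k (Finset.mem_sdiff.1 (Finset.mem_of_mem_erase hk)).2
    linarith
  -- the equation coming from Λ(βA) = 0
  have hM : ∑ k, βA k * mv k
      = μm * (∑ k, βA k) + (μp - μm) * ∑ k ∈ Im d m, βA k := by
    have e1 : ∀ k : Fin d, βA k * mv k
        = μm * βA k + (if k ∈ Im d m then (μp - μm) * βA k else 0) := by
      intro k
      have hIm : k ∈ Im d m ↔ (k : ℕ) < m := by simp [Im]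
      by_cases hk : (k : ℕ) < m
      · rw [if_pos (hIm.2 hk)]
        simp only [hmv_def, if_pos hk]
        ring
      · rw [if_neg (fun h => hk (hIm.1 h))]
        simp only [hmv_def, if_neg hk]
        ring
    rw [Finset.sum_congr rfl fun k _ => e1 k, Finset.sum_add_distrib, Fintype.sum_ite_mem,
      ← Finset.mul_sum, ← Finset.mul_sum]
  have heq0 : σ2 * (1 - ρ) * c * (c + βA l - βA l')
      + (1/2) * (σ2 * ((1 - ρ) * ∑ k, βA k ^ 2)) = 0 := by
    have h0 := hβcgf
    rw [(hcgf βA).2, hM, hSI, hT0] at h0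
    linear_combination h0 - (c + βA l - βA l') * hDc
  have hQ2 : βA l ^ 2 + βA l' ^ 2 ≤ ∑ k, βA k ^ 2 := by
    calc βA l ^ 2 + βA l' ^ 2 = ∑ k ∈ ({l, l'} : Finset (Fin d)), βA k ^ 2 := by
          rw [Finset.sum_pair hll']
      _ ≤ ∑ k, βA k ^ 2 := Finset.sum_le_sum_of_subset_of_nonneg (Finset.subset_univ _)
          (fun k _ _ => sq_nonneg _)
  obtain ⟨hβl'v, hβlv, hQval⟩ := pin' hs heq0 hQ2 hβl'_le hβl_ge
  have hrest : ∀ k : Fin d, k ≠ l → k ≠ l' → βA k = 0 := by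
    have e1 : ∑ k ∈ (Finset.univ.erase l).erase l', βA k ^ 2 + βA l' ^ 2
        = ∑ k ∈ Finset.univ.erase l, βA k ^ 2 :=
      Finset.sum_erase_add _ _ (Finset.mem_erase.2 ⟨hll'.symm, Finset.mem_univ _⟩)
    have e2 : ∑ k ∈ Finset.univ.erase l, βA k ^ 2 + βA l ^ 2 = ∑ k, βA k ^ 2 :=
      Finset.sum_erase_add _ _ (Finset.mem_univ _)
    have hv1 : βA l ^ 2 = c ^ 2 := by rw [hβlv]; ring
    have hv2 : βA l' ^ 2 = c ^ 2 := by rw [hβl'v]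
    have e3 : ∑ k ∈ (Finset.univ.erase l).erase l', βA k ^ 2 = 0 := by
      rw [hQval, hv1] at e2
      rw [hv2] at e1
      linarith
    intro k hk1 hk2
    have hkmem : k ∈ (Finset.univ.erase l).erase l' :=
      Finset.mem_erase.2 ⟨hk2, Finset.mem_erase.2 ⟨hk1, Finset.mem_univ _⟩⟩
    have h8 := (Finset.sum_eq_zero_iff_of_nonneg
      (fun i _ => sq_nonneg (βA i))).mp e3 k hkmem
    exact sq_eq_zero_iff.mp h8
  have hβγ : βA = γt := by
    ext k
    by_cases hk1 : k = l
    · subst hk1; rw [hβlv, hγlc]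
    · by_cases hk2 : k = l'
      · subst hk2; rw [hβl'v, hγl'c]
      · rw [hrest k hk1 hk2, hγsupp k hk1 hk2]
  refine ⟨?_, hβγ, hγlc, hγl'c, hγsupp⟩
  rw [hztc]
  exact hrOf

end Paper
end
end

section
/- Let 2 ≤ L < d and let θ ∈ ℝ^d satisfy θ_1 ≥ θ_2 ≥ … ≥ θ_d ≥ 0. Consider the linear program: minimize θ·x over x ∈ ℝ^d subject to x_k ≥ 0 for every k ∈ [d] and Σ_{k∈B} x_k ≥ 1 for every B ⊆ [d] with |B| = L. Setting θ̃_L := Σ_{k=L}^d θ_k, the optimal value equals min{ θ̃_L, (θ̃_L + θ_{L−1})/2, (θ̃_L + θ_{L−1} + θ_{L−2})/3, …, (θ̃_L + θ_{L−1} + … + θ_1)/L }. -/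
noncomputable section

namespace Paper

private def Wsum (d L : ℕ) (θ : Fin d → ℝ) (j : ℕ) : ℝ :=
  ∑ i : Fin d, if L - j ≤ (i : ℕ) then θ i else 0

private lemma Wsum_nonneg (d L : ℕ) (θ : Fin d → ℝ) (hnonneg : ∀ i, 0 ≤ θ i) (j : ℕ) :
    0 ≤ Wsum d L θ j := by
  refine Finset.sum_nonneg fun i _ => ?_
  split
  · exact hnonneg i
  · exact le_rfl

private lemma tele_Ico (A : ℕ → ℝ) {m n : ℕ} (h : m ≤ n) :
    ∑ k ∈ Finset.Ico m n, (A k - A (k + 1)) = A m - A n := by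
  induction n, h using Nat.le_induction with
  | base => simp
  | succ n hmn ih => rw [Finset.sum_Ico_succ_top hmn, ih]; ring

private lemma tele_abel (A : ℕ → ℝ) (n : ℕ) :
    ∑ k ∈ Finset.range n, ((k : ℝ) + 1) * (A k - A (k + 1)) =
      (∑ k ∈ Finset.range n, A k) - n * A n := by
  induction n with
  | zero => simp
  | succ n ih =>
      rw [Finset.sum_range_succ, Finset.sum_range_succ, ih]
      push_cast; ring

private lemma lower_aux (d L : ℕ) (hL2 : 2 ≤ L) (hLd : L < d) (θ : Fin d → ℝ)
    (hmono : ∀ i j : Fin d, i ≤ j → θ j ≤ θ i) (hnonneg : ∀ i, 0 ≤ θ i)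
    (y : Fin d → ℝ) (hy0 : ∀ i, 0 ≤ y i) (hymono : Monotone y)
    (hfeas : 1 ≤ ∑ n : Fin L, y (Fin.castLE hLd.le n)) :
    ∃ k0 : ℕ, k0 < L ∧ ((k0 : ℝ) + 1)⁻¹ * Wsum d L θ (k0 + 1) ≤ ∑ i, θ i * y i := by
  classical
  set A : ℕ → ℝ := fun k => if h : k < L then y ⟨L - 1 - k, by omega⟩ else 0 with hA
  have hAL : ∀ k, L ≤ k → A k = 0 := fun k hk => dif_neg (by omega)
  have hA0 : ∀ k, 0 ≤ A k := by
    intro k; simp only [hA]; split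
    · exact hy0 _
    · exact le_rfl
  have hAmono : ∀ k, A (k + 1) ≤ A k := by
    intro k
    by_cases h1 : k + 1 < L
    · have h0 : k < L := by omega
      simp only [hA, dif_pos h1, dif_pos h0]
      exact hymono (by simp only [Fin.mk_le_mk]; omega)
    · rw [hAL _ (by omega)]; exact hA0 k
  -- sum of A over range L equals the feasibility sum
  have hsumA : (1 : ℝ) ≤ ∑ k ∈ Finset.range L, A k := by
    set g : ℕ → ℝ := fun k => if h : k < L then y ⟨k, by omega⟩ else 0 with hg
    have h1 : ∑ k ∈ Finset.range L, A k = ∑ k ∈ Finset.range L, g k := by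
      rw [← Finset.sum_range_reflect g L]
      refine Finset.sum_congr rfl fun k hk => ?_
      have hk' : k < L := Finset.mem_range.mp hk
      have hk2 : L - 1 - k < L := by omega
      simp only [hA, hg, dif_pos hk', dif_pos hk2]
    have h2 : ∑ k ∈ Finset.range L, g k = ∑ n : Fin L, y (Fin.castLE hLd.le n) := by
      rw [← Fin.sum_univ_eq_sum_range g L]
      refine Finset.sum_congr rfl fun n _ => ?_
      have : (n : ℕ) < L := n.2
      simp only [hg, dif_pos this]
      rfl
    rw [h1, h2]; exact hfeas
  -- Abel / swap claim
  have hC1 : ∑ k ∈ Finset.range L, (A k - A (k + 1)) * Wsum d L θ (k + 1) ≤ ∑ i, θ i * y i := by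
    have hswap : ∑ k ∈ Finset.range L, (A k - A (k + 1)) * Wsum d L θ (k + 1)
        = ∑ i : Fin d, θ i * A (L - 1 - (i : ℕ)) := by
      simp only [Wsum, Finset.mul_sum]
      rw [Finset.sum_comm]
      refine Finset.sum_congr rfl fun i _ => ?_
      have hpt : ∀ k ∈ Finset.range L,
          (A k - A (k + 1)) * (if L - (k + 1) ≤ (i : ℕ) then θ i else 0)
            = if L - 1 - (i : ℕ) ≤ k then θ i * (A k - A (k + 1)) else 0 := by
        intro k _
        by_cases h : L - (k + 1) ≤ (i : ℕ)
        · rw [if_pos h, if_pos (by omega)]; ring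
        · rw [if_neg h, if_neg (by omega)]; ring
      rw [Finset.sum_congr rfl hpt, ← Finset.sum_filter]
      have hfilt : (Finset.range L).filter (fun k => L - 1 - (i : ℕ) ≤ k)
          = Finset.Ico (L - 1 - (i : ℕ)) L := by
        ext k; simp only [Finset.mem_filter, Finset.mem_range, Finset.mem_Ico]; omega
      rw [hfilt, ← Finset.mul_sum, tele_Ico A (by omega), hAL L le_rfl, sub_zero]
    rw [hswap]
    refine Finset.sum_le_sum fun i _ => ?_
    by_cases hi : (i : ℕ) < L
    · have h2 : L - 1 - (L - 1 - (i : ℕ)) = (i : ℕ) := by omega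
      have h3 : L - 1 - (i : ℕ) < L := by omega
      have : A (L - 1 - (i : ℕ)) = y i := by
        simp only [hA, dif_pos h3]
        congr 1
        exact Fin.ext (by simp [h2])
      rw [this]
    · have h0 : L - 1 - (i : ℕ) = 0 := by omega
      have h1 : (0 : ℕ) < L := by omega
      have hle : (⟨L - 1, by omega⟩ : Fin d) ≤ i := by
        simp only [Fin.le_def]; omega
      have : A (L - 1 - (i : ℕ)) = y ⟨L - 1, by omega⟩ := by
        rw [h0]; simp only [hA, dif_pos h1]
        exact congrArg y (Fin.ext (Nat.sub_zero _))
      rw [this]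
      exact mul_le_mul_of_nonneg_left (hymono hle) (hnonneg i)
  -- choose minimizing k0
  obtain ⟨k0, hk0mem, hk0min⟩ := Finset.exists_min_image (Finset.range L)
    (fun k => ((k : ℝ) + 1)⁻¹ * Wsum d L θ (k + 1)) ⟨0, Finset.mem_range.mpr (by omega)⟩
  have hk0L : k0 < L := Finset.mem_range.mp hk0mem
  refine ⟨k0, hk0L, ?_⟩
  have hf0 : 0 ≤ ((k0 : ℝ) + 1)⁻¹ * Wsum d L θ (k0 + 1) :=
    mul_nonneg (by positivity) (Wsum_nonneg d L θ hnonneg _)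
  have key : ((k0 : ℝ) + 1)⁻¹ * Wsum d L θ (k0 + 1)
      ≤ ∑ k ∈ Finset.range L, (A k - A (k + 1)) * Wsum d L θ (k + 1) := by
    have habel : (1 : ℝ) ≤ ∑ k ∈ Finset.range L, ((k : ℝ) + 1) * (A k - A (k + 1)) := by
      rw [tele_abel A L, hAL L le_rfl]
      simpa using hsumA
    calc ((k0 : ℝ) + 1)⁻¹ * Wsum d L θ (k0 + 1)
        ≤ (((k0 : ℝ) + 1)⁻¹ * Wsum d L θ (k0 + 1))
            * ∑ k ∈ Finset.range L, ((k : ℝ) + 1) * (A k - A (k + 1)) :=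
          le_mul_of_one_le_right hf0 habel
      _ = ∑ k ∈ Finset.range L, (((k0 : ℝ) + 1)⁻¹ * Wsum d L θ (k0 + 1))
            * (((k : ℝ) + 1) * (A k - A (k + 1))) := Finset.mul_sum _ _ _
      _ ≤ ∑ k ∈ Finset.range L, (((k : ℝ) + 1)⁻¹ * Wsum d L θ (k + 1))
            * (((k : ℝ) + 1) * (A k - A (k + 1))) := by
          refine Finset.sum_le_sum fun k hk => ?_
          have hnn : 0 ≤ ((k : ℝ) + 1) * (A k - A (k + 1)) :=
            mul_nonneg (by positivity) (sub_nonneg.mpr (hAmono k))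
          exact mul_le_mul_of_nonneg_right (hk0min k hk) hnn
      _ = ∑ k ∈ Finset.range L, (A k - A (k + 1)) * Wsum d L θ (k + 1) := by
          refine Finset.sum_congr rfl fun k _ => ?_
          have hne : ((k : ℝ) + 1) ≠ 0 := by positivity
          field_simp
  exact key.trans hC1

theorem statement18
    (d L : ℕ) (hL2 : 2 ≤ L) (hLd : L < d) (θ : Fin d → ℝ)
    (hmono : ∀ i j : Fin d, i ≤ j → θ j ≤ θ i)
    (hnonneg : ∀ i, 0 ≤ θ i) :
    IsLeast
      {v : ℝ | ∃ x : Fin d → ℝ,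
        (∀ k, 0 ≤ x k) ∧
        (∀ B : Finset (Fin d), B.card = L → 1 ≤ ∑ k ∈ B, x k) ∧
        v = ∑ i, θ i * x i}
      (sInf {v : ℝ | ∃ j : ℕ, 1 ≤ j ∧ j ≤ L ∧
        v = (j : ℝ)⁻¹ * ∑ i : Fin d, if L - j ≤ (i : ℕ) then θ i else 0}) := by
  classical
  have hL1 : 1 ≤ L := by omega
  set S := {v : ℝ | ∃ x : Fin d → ℝ,
        (∀ k, 0 ≤ x k) ∧
        (∀ B : Finset (Fin d), B.card = L → 1 ≤ ∑ k ∈ B, x k) ∧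
        v = ∑ i, θ i * x i} with hSdef
  set T := {v : ℝ | ∃ j : ℕ, 1 ≤ j ∧ j ≤ L ∧
        v = (j : ℝ)⁻¹ * ∑ i : Fin d, if L - j ≤ (i : ℕ) then θ i else 0} with hTdef
  have hTne : T.Nonempty := ⟨_, 1, le_rfl, hL1, rfl⟩
  have hTfin : T.Finite := by
    have hsub : T ⊆ (fun j : ℕ => (j : ℝ)⁻¹ * ∑ i : Fin d,
        if L - j ≤ (i : ℕ) then θ i else 0) '' (Set.Icc 1 L) := by
      rintro v ⟨j, h1, h2, rfl⟩
      exact ⟨j, ⟨h1, h2⟩, rfl⟩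
    exact ((Set.finite_Icc 1 L).image _).subset hsub
  -- any candidate value is attained by a feasible point
  have hS : ∀ j : ℕ, 1 ≤ j → j ≤ L →
      ((j : ℝ)⁻¹ * ∑ i : Fin d, if L - j ≤ (i : ℕ) then θ i else 0) ∈ S := by
    intro j hj1 hjL
    have hj0 : (0 : ℝ) < (j : ℝ) := by exact_mod_cast hj1
    refine ⟨fun i => if L - j ≤ (i : ℕ) then (j : ℝ)⁻¹ else 0, fun k => ?_, fun B hB => ?_, ?_⟩
    · dsimp only; split
      · positivity
      · exact le_rfl
    · have hneg : (B.filter (fun k : Fin d => ¬ (L - j ≤ (k : ℕ)))).card ≤ L - j := by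
        have hf : ∀ k ∈ B.filter (fun k : Fin d => ¬ (L - j ≤ (k : ℕ))),
            (k : ℕ) ∈ Finset.range (L - j) := by
          intro k hk
          simp only [Finset.mem_filter, not_le] at hk
          simpa [Finset.mem_range] using hk.2
        have hcard := Finset.card_le_card_of_injOn (fun k : Fin d => (k : ℕ))
          hf (fun a _ b _ h => Fin.ext h)
        rwa [Finset.card_range] at hcard
      have hsplit := Finset.card_filter_add_card_filter_not
        (s := B) (p := fun k : Fin d => L - j ≤ (k : ℕ))
      have hge : j ≤ (B.filter (fun k : Fin d => L - j ≤ (k : ℕ))).card := by omega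
      have hsum : ∑ k ∈ B, (if L - j ≤ (k : ℕ) then (j : ℝ)⁻¹ else 0)
          = ((B.filter (fun k : Fin d => L - j ≤ (k : ℕ))).card : ℝ) * (j : ℝ)⁻¹ := by
        rw [← Finset.sum_filter, Finset.sum_const, nsmul_eq_mul]
      show (1 : ℝ) ≤ ∑ k ∈ B, (if L - j ≤ (k : ℕ) then (j : ℝ)⁻¹ else 0)
      rw [hsum]
      calc (1 : ℝ) = (j : ℝ) * (j : ℝ)⁻¹ := (mul_inv_cancel₀ hj0.ne').symm
        _ ≤ ((B.filter (fun k : Fin d => L - j ≤ (k : ℕ))).card : ℝ) * (j : ℝ)⁻¹ := by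
            have : (j : ℝ) ≤ ((B.filter (fun k : Fin d => L - j ≤ (k : ℕ))).card : ℝ) := by
              exact_mod_cast hge
            exact mul_le_mul_of_nonneg_right this (inv_nonneg.mpr hj0.le)
    · rw [Finset.mul_sum]
      refine Finset.sum_congr rfl fun i _ => ?_
      by_cases h : L - j ≤ (i : ℕ) <;> simp [h, mul_comm]
  constructor
  · obtain ⟨j, hj1, hjL, hveq⟩ := hTne.csInf_mem hTfin
    rw [hveq]
    exact hS j hj1 hjL
  · rintro v ⟨x, hx0, hxB, rfl⟩
    -- sort x
    set σ := Tuple.sort x with hσ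
    set y : Fin d → ℝ := x ∘ σ with hy
    have hymono : Monotone y := Tuple.monotone_sort x
    have hy0 : ∀ i, 0 ≤ y i := fun i => hx0 _
    have hrearr : ∑ i, θ i * y i ≤ ∑ i, θ i * x i := by
      have hanti : Antitone θ := fun i j h => hmono i j h
      have hv : Antivary θ y := hanti.antivary hymono
      calc ∑ i, θ i * y i ≤ ∑ i, θ (σ i) * y i := by
            simpa [smul_eq_mul] using hv.sum_smul_le_sum_comp_perm_smul (σ := σ)
        _ = ∑ i, θ i * x i := Equiv.sum_comp σ (fun i => θ i * x i)
    have hfeas : 1 ≤ ∑ n : Fin L, y (Fin.castLE hLd.le n) := by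
      have hinj : Function.Injective (fun n : Fin L => σ (Fin.castLE hLd.le n)) :=
        σ.injective.comp (Fin.castLE_injective _)
      have hcard : (Finset.image (fun n : Fin L => σ (Fin.castLE hLd.le n))
          Finset.univ).card = L := by
        rw [Finset.card_image_of_injective _ hinj, Finset.card_univ, Fintype.card_fin]
      have hc := hxB _ hcard
      rwa [Finset.sum_image (fun a _ b _ h => hinj h)] at hc
    obtain ⟨k0, hk0L, hle⟩ := lower_aux d L hL2 hLd θ hmono hnonneg y hy0 hymono hfeas
    have hmemT : (((k0 + 1 : ℕ) : ℝ))⁻¹ * ∑ i : Fin d,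
        (if L - (k0 + 1) ≤ (i : ℕ) then θ i else 0) ∈ T :=
      ⟨k0 + 1, by omega, by omega, rfl⟩
    have hcast : (((k0 + 1 : ℕ) : ℝ))⁻¹ * ∑ i : Fin d,
        (if L - (k0 + 1) ≤ (i : ℕ) then θ i else 0)
        = ((k0 : ℝ) + 1)⁻¹ * Wsum d L θ (k0 + 1) := by
      push_cast [Wsum]
      ring
    exact le_trans (csInf_le hTfin.bddBelow hmemT) ((hcast ▸ hle).trans hrearr)

end Paper
end
end
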